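/- arXiv:0909.2428 — 7 statements merged into one kernel-verified Lean document; each statement's English description precedes it below -/
import Mathlib

section
/- Let f : ℝ → ℝ be twice differentiable with f''(u) = -2 f(u)^3 for all u ∈ ℝ. Let λ > 0, μ ∈ ℝ, θ ∈ ℝ, and let p = (p₀,p₁,p₂,p₃) ∈ ℝ⁴ satisfy the dispersion relation p₀² - p₁² - p₂² - p₃² = μ² √(λ/2). Then the function φ : ℝ⁴ → ℝ defined by φ(x₀,x₁,x₂,x₃) = μ (2/λ)^{1/4} f(p₀x₀ - p₁x₁ - p₂x₂ - p₃x₃ + θ) satisfies the massless quartic field equation ∂²φ/∂x₀² - ∂²φ/∂x₁² - ∂²φ/∂x₂² - ∂²φ/∂x₃² + λ φ³ = 0 on all of ℝ⁴. -/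
lemma aux_second_deriv (f : ℝ → ℝ) (hf : Differentiable ℝ f)
    (hf' : Differentiable ℝ (deriv f)) (C c b t : ℝ) :
    deriv (fun s => deriv (fun u => C * f (c * u + b)) s) t
      = C * c ^ 2 * deriv (deriv f) (c * t + b) := by
  have h1 : ∀ u : ℝ, HasDerivAt (fun u => C * f (c * u + b))
      (C * (c * deriv f (c * u + b))) u := by
    intro u
    have haff : HasDerivAt (fun u : ℝ => c * u + b) c u := by
      simpa using ((hasDerivAt_id u).const_mul c).add_const b
    have := ((hf (c * u + b)).hasDerivAt.comp u haff).const_mul C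
    simpa [mul_comm, mul_left_comm] using this
  have hrw : deriv (fun u => C * f (c * u + b))
      = fun u => C * (c * deriv f (c * u + b)) := funext fun u => (h1 u).deriv
  rw [hrw]
  have haff : HasDerivAt (fun u : ℝ => c * u + b) c t := by
    simpa using ((hasDerivAt_id t).const_mul c).add_const b
  have h2 : HasDerivAt (fun u => C * (c * deriv f (c * u + b)))
      (C * (c * (c * deriv (deriv f) (c * t + b)))) t := by
    have := (((hf' (c * t + b)).hasDerivAt.comp t haff).const_mul c).const_mul C
    simpa [mul_comm, mul_left_comm] using this
  rw [h2.deriv]; ring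

/-- An exact travelling-wave solution of the massless quartic field
equation `□φ + λφ³ = 0` built from a solution `f` of `f'' = -2f³`, provided the
dispersion relation `p₀² - p₁² - p₂² - p₃² = μ²√(λ/2)` holds. -/
theorem scalar_field_exact_solution
    (f : ℝ → ℝ) (hf : Differentiable ℝ f) (hf' : Differentiable ℝ (deriv f))
    (hODE : ∀ u : ℝ, deriv (deriv f) u = -2 * f u ^ 3)
    (lam μ θ p₀ p₁ p₂ p₃ : ℝ) (hlam : 0 < lam)
    (hdisp : p₀ ^ 2 - p₁ ^ 2 - p₂ ^ 2 - p₃ ^ 2 = μ ^ 2 * Real.sqrt (lam / 2))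
    (φ : ℝ → ℝ → ℝ → ℝ → ℝ)
    (hφ : ∀ x₀ x₁ x₂ x₃ : ℝ, φ x₀ x₁ x₂ x₃ =
      μ * (2 / lam) ^ ((1 : ℝ) / 4) * f (p₀ * x₀ - p₁ * x₁ - p₂ * x₂ - p₃ * x₃ + θ)) :
    ∀ x₀ x₁ x₂ x₃ : ℝ,
      deriv (fun t => deriv (fun s => φ s x₁ x₂ x₃) t) x₀
      - deriv (fun t => deriv (fun s => φ x₀ s x₂ x₃) t) x₁
      - deriv (fun t => deriv (fun s => φ x₀ x₁ s x₃) t) x₂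
      - deriv (fun t => deriv (fun s => φ x₀ x₁ x₂ s) t) x₃
      + lam * φ x₀ x₁ x₂ x₃ ^ 3 = 0 := by
  intro x₀ x₁ x₂ x₃
  set C : ℝ := μ * (2 / lam) ^ ((1 : ℝ) / 4) with hC
  set w : ℝ := p₀ * x₀ - p₁ * x₁ - p₂ * x₂ - p₃ * x₃ + θ with hw
  have e0 : (fun s => φ s x₁ x₂ x₃) = fun s => C * f (p₀ * s + (- p₁ * x₁ - p₂ * x₂ - p₃ * x₃ + θ)) := by
    funext s; rw [hφ]; ring_nf
  have e1 : (fun s => φ x₀ s x₂ x₃) = fun s => C * f ((-p₁) * s + (p₀ * x₀ - p₂ * x₂ - p₃ * x₃ + θ)) := by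
    funext s; rw [hφ]; ring_nf
  have e2 : (fun s => φ x₀ x₁ s x₃) = fun s => C * f ((-p₂) * s + (p₀ * x₀ - p₁ * x₁ - p₃ * x₃ + θ)) := by
    funext s; rw [hφ]; ring_nf
  have e3 : (fun s => φ x₀ x₁ x₂ s) = fun s => C * f ((-p₃) * s + (p₀ * x₀ - p₁ * x₁ - p₂ * x₂ + θ)) := by
    funext s; rw [hφ]; ring_nf
  rw [e0, e1, e2, e3, aux_second_deriv f hf hf', aux_second_deriv f hf hf',
    aux_second_deriv f hf hf', aux_second_deriv f hf hf', hφ]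
  have harg0 : p₀ * x₀ + (- p₁ * x₁ - p₂ * x₂ - p₃ * x₃ + θ) = w := by rw [hw]; ring
  have harg1 : (-p₁) * x₁ + (p₀ * x₀ - p₂ * x₂ - p₃ * x₃ + θ) = w := by rw [hw]; ring
  have harg2 : (-p₂) * x₂ + (p₀ * x₀ - p₁ * x₁ - p₃ * x₃ + θ) = w := by rw [hw]; ring
  have harg3 : (-p₃) * x₃ + (p₀ * x₀ - p₁ * x₁ - p₂ * x₂ + θ) = w := by rw [hw]; ring
  rw [harg0, harg1, harg2, harg3, hODE w]
  have hC2 : lam * C ^ 2 = 2 * (μ ^ 2 * Real.sqrt (lam / 2)) := by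
    have h2 : (Real.sqrt 2) ^ 2 = 2 := Real.sq_sqrt (by norm_num)
    have hl : (Real.sqrt lam) ^ 2 = lam := Real.sq_sqrt hlam.le
    have hlpos : 0 < Real.sqrt lam := Real.sqrt_pos.2 hlam
    have h2pos : (0:ℝ) < Real.sqrt 2 := Real.sqrt_pos.2 (by norm_num)
    have h4 : C ^ 2 = μ ^ 2 * (Real.sqrt 2 / Real.sqrt lam) := by
      rw [hC, mul_pow, ← Real.rpow_natCast ((2 / lam) ^ ((1 : ℝ) / 4)) 2,
        ← Real.rpow_mul (by positivity)]
      norm_num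
      rw [← Real.sqrt_eq_rpow, Real.sqrt_div (by norm_num)]
      exact Or.inl rfl
    rw [h4, Real.sqrt_div hlam.le]
    field_simp
    linear_combination (lam * μ ^ 2) * h2 - (2 * μ ^ 2) * hl
  have key : C * (p₀ ^ 2 - p₁ ^ 2 - p₂ ^ 2 - p₃ ^ 2) * (-2 * f w ^ 3)
      + lam * (C * f w) ^ 3 = 0 := by
    rw [hdisp]
    have : lam * (C * f w) ^ 3 = (lam * C ^ 2) * C * f w ^ 3 := by ring
    rw [this, hC2]; ring
  linear_combination key
end

section
/- There exists a unique function f : ℝ → ℝ, twice continuously differentiable on all of ℝ, such that f''(u) = -2 f(u)^3 for all u ∈ ℝ, f(0) = 0 and f'(0) = 1. Moreover this solution satisfies |f(u)| ≤ 1 and |f'(u)| ≤ 1 for all u ∈ ℝ. -/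
open Set Metric Real

noncomputable section SnAux

/-- The first-order vector field for `f'' = -2 f³`. -/
def snV : ℝ × ℝ → ℝ × ℝ := fun p => (p.2, -2 * p.1 ^ 3)

lemma snV_lipschitz : LipschitzOnWith 24 snV (closedBall (0 : ℝ × ℝ) 2) := by
  rw [lipschitzOnWith_iff_dist_le_mul]
  intro z hz w hw
  rw [mem_closedBall_zero_iff] at hz hw
  have hz1 : |z.1| ≤ 2 := by rw [← Real.norm_eq_abs]; exact (norm_fst_le z).trans hz
  have hw1 : |w.1| ≤ 2 := by rw [← Real.norm_eq_abs]; exact (norm_fst_le w).trans hw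
  have hd1 : dist z.1 w.1 ≤ dist z w := by rw [Prod.dist_eq]; exact le_max_left _ _
  have hd2 : dist z.2 w.2 ≤ dist z w := by rw [Prod.dist_eq]; exact le_max_right _ _
  obtain ⟨hz1a, hz1b⟩ := abs_le.mp hz1
  obtain ⟨hw1a, hw1b⟩ := abs_le.mp hw1
  have hdnn : (0:ℝ) ≤ dist z w := dist_nonneg
  have main : dist (snV z) (snV w) ≤ 24 * dist z w := by
    rw [show dist (snV z) (snV w)
        = max (dist z.2 w.2) (dist (-2 * z.1 ^ 3) (-2 * w.1 ^ 3)) from by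
      simp [snV, Prod.dist_eq]]
    apply max_le
    · exact le_trans hd2 (by nlinarith)
    · have key : |(-2 * z.1 ^ 3) - (-2 * w.1 ^ 3)|
          = |w.1 - z.1| * |2 * (z.1 ^ 2 + z.1 * w.1 + w.1 ^ 2)| := by
        rw [← abs_mul]; ring_nf
      have hq : |2 * (z.1 ^ 2 + z.1 * w.1 + w.1 ^ 2)| ≤ 24 := by
        rw [abs_le]
        constructor <;> nlinarith [sq_nonneg (z.1 + w.1), sq_nonneg (z.1 - w.1)]
      rw [Real.dist_eq, key]
      have h1d : |w.1 - z.1| ≤ dist z w := by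
        rw [← Real.dist_eq, dist_comm]; exact hd1
      calc |w.1 - z.1| * |2 * (z.1 ^ 2 + z.1 * w.1 + w.1 ^ 2)|
          ≤ dist z w * 24 := mul_le_mul h1d hq (abs_nonneg _) hdnn
        _ = 24 * dist z w := by ring
  simpa using main

/-- Uniform-size Picard–Lindelöf data around any point of norm ≤ 1. -/
lemma snV_picard (t₀ : ℝ) (x₀ : ℝ × ℝ) (hx : ‖x₀‖ ≤ 1) :
    IsPicardLindelof (tmin := t₀ - 16⁻¹) (tmax := t₀ + 16⁻¹) (fun _ => snV)
      ⟨t₀, by constructor <;> linarith [show (0:ℝ) < 16⁻¹ by norm_num]⟩ x₀ 1 0 16 24 := by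
  have hsub : closedBall x₀ 1 ⊆ closedBall (0 : ℝ × ℝ) 2 := by
    apply closedBall_subset_closedBall'
    rw [dist_zero_right]
    linarith
  refine ⟨fun t _ => snV_lipschitz.mono hsub, fun _ _ => continuousOn_const,
    fun t _ x hx => ?_, ?_⟩
  · have hx2 : ‖x‖ ≤ 2 := mem_closedBall_zero_iff.mp (hsub (by simpa using hx))
    push_cast
    have h1 : |x.1| ≤ 2 := by rw [← Real.norm_eq_abs]; exact (norm_fst_le x).trans hx2
    have h2 : |x.2| ≤ 2 := by rw [← Real.norm_eq_abs]; exact (norm_snd_le x).trans hx2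
    obtain ⟨h1a, h1b⟩ := abs_le.mp h1
    obtain ⟨h2a, h2b⟩ := abs_le.mp h2
    have : ‖snV x‖ = max ‖x.2‖ ‖-2 * x.1 ^ 3‖ := rfl
    rw [this]
    apply max_le
    · rw [Real.norm_eq_abs, abs_le]; constructor <;> linarith
    · have k1 : (0:ℝ) ≤ (2 - x.1) * (x.1 + 2) := mul_nonneg (by linarith) (by linarith)
      have k2 : (0:ℝ) ≤ (2 - x.1) * x.1 ^ 2 := mul_nonneg (by linarith) (sq_nonneg _)
      have k3 : (0:ℝ) ≤ (x.1 + 2) * x.1 ^ 2 := mul_nonneg (by linarith) (sq_nonneg _)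
      rw [Real.norm_eq_abs, abs_le]; constructor <;> nlinarith
  · norm_num

/-- Energy conservation for solutions on an interval. -/
lemma sn_energy_Icc {a b : ℝ} {g : ℝ → ℝ × ℝ} (ha : a ≤ 0) (hb : 0 ≤ b)
    (hg : ∀ t ∈ Icc a b, HasDerivWithinAt g (snV (g t)) (Icc a b) t)
    (h0 : g 0 = (0, 1)) :
    ∀ t ∈ Icc a b, (g t).1 ^ 4 + (g t).2 ^ 2 = 1 := by
  have h0I : (0:ℝ) ∈ Icc a b := ⟨ha, hb⟩
  set E : ℝ → ℝ := fun t => (g t).1 ^ 4 + (g t).2 ^ 2 with hE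
  have hder : ∀ t ∈ Icc a b, HasDerivWithinAt E 0 (Icc a b) t := by
    intro t ht
    have hgt := hg t ht
    have h1 : HasDerivWithinAt (fun u => (g u).1) ((g t).2) (Icc a b) t := by
      have := (ContinuousLinearMap.fst ℝ ℝ ℝ).hasFDerivAt.comp_hasDerivWithinAt t hgt
      simpa [snV, Function.comp_def] using this
    have h2 : HasDerivWithinAt (fun u => (g u).2) (-2 * (g t).1 ^ 3) (Icc a b) t := by
      have := (ContinuousLinearMap.snd ℝ ℝ ℝ).hasFDerivAt.comp_hasDerivWithinAt t hgt
      simpa [snV, Function.comp_def] using this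
    have hsum := (h1.pow 4).add (h2.pow 2)
    refine hsum.congr_deriv ?_
    push_cast
    ring
  have hcont : ContinuousOn E (Icc a b) := fun t ht => (hder t ht).continuousWithinAt
  have key : ∀ t ∈ Icc a b, E t = E a :=
    constant_of_has_deriv_right_zero hcont (fun x hx =>
      (hder x (Ico_subset_Icc_self hx)).mono_of_mem_nhdsWithin (Icc_mem_nhdsGE_of_mem hx))
  intro t ht
  have e1 : E t = E a := key t ht
  have e2 : E 0 = E a := key 0 h0I
  have e3 : E 0 = 1 := by simp [hE, h0]
  show E t = 1
  linarith

lemma sn_bound_of_energy {x y : ℝ} (h : x ^ 4 + y ^ 2 = 1) : |x| ≤ 1 ∧ |y| ≤ 1 := by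
  have hx2 : x ^ 2 ≤ 1 := by nlinarith [sq_nonneg y, sq_nonneg (x ^ 2 - 1)]
  have hy2 : y ^ 2 ≤ 1 := by nlinarith [sq_nonneg x, sq_nonneg (x ^ 2)]
  constructor <;> rw [abs_le] <;> constructor <;> nlinarith

lemma sn_norm_le {p : ℝ × ℝ} (h : p.1 ^ 4 + p.2 ^ 2 = 1) : ‖p‖ ≤ 1 := by
  obtain ⟨h1, h2⟩ := sn_bound_of_energy h
  rw [Prod.norm_def]
  exact max_le (by rwa [Real.norm_eq_abs]) (by rwa [Real.norm_eq_abs])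

/-- Uniqueness of interval solutions with initial data `(0,1)` at `0`. -/
lemma sn_uniq_Icc {a b : ℝ} (ha : a < 0) (hb : 0 < b) {g₁ g₂ : ℝ → ℝ × ℝ}
    (h₁ : ∀ t ∈ Icc a b, HasDerivWithinAt g₁ (snV (g₁ t)) (Icc a b) t) (e₁ : g₁ 0 = (0, 1))
    (h₂ : ∀ t ∈ Icc a b, HasDerivWithinAt g₂ (snV (g₂ t)) (Icc a b) t) (e₂ : g₂ 0 = (0, 1)) :
    EqOn g₁ g₂ (Icc a b) := by
  have hE₁ := sn_energy_Icc ha.le hb.le h₁ e₁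
  have hE₂ := sn_energy_Icc ha.le hb.le h₂ e₂
  exact ODE_solution_unique_of_mem_Icc (v := fun _ => snV) (s := fun _ => closedBall 0 2)
    (fun _ _ => snV_lipschitz) ⟨ha, hb⟩
    (fun t ht => (h₁ t ht).continuousWithinAt)
    (fun t ht => (h₁ t (Ioo_subset_Icc_self ht)).hasDerivAt (Icc_mem_nhds ht.1 ht.2))
    (fun t ht => mem_closedBall_zero_iff.mpr
      ((sn_norm_le (hE₁ t (Ioo_subset_Icc_self ht))).trans one_le_two))
    (fun t ht => (h₂ t ht).continuousWithinAt)
    (fun t ht => (h₂ t (Ioo_subset_Icc_self ht)).hasDerivAt (Icc_mem_nhds ht.1 ht.2))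
    (fun t ht => mem_closedBall_zero_iff.mpr
      ((sn_norm_le (hE₂ t (Ioo_subset_Icc_self ht))).trans one_le_two))
    (e₁.trans e₂.symm)

/-- Extension step: a solution on `[-c, c]` extends to `[-(c+1/16), c+1/16]`. -/
lemma sn_glue {c : ℝ} (hc : 0 ≤ c) {g : ℝ → ℝ × ℝ} (h0 : g 0 = (0, 1))
    (hg : ∀ t ∈ Icc (-c) c, HasDerivWithinAt g (snV (g t)) (Icc (-c) c) t) :
    ∃ G : ℝ → ℝ × ℝ, G 0 = (0, 1) ∧
      ∀ t ∈ Icc (-(c + 16⁻¹)) (c + 16⁻¹),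
        HasDerivWithinAt G (snV (G t)) (Icc (-(c + 16⁻¹)) (c + 16⁻¹)) t := by
  have hcneg : -c ≤ c := by linarith
  have h0I : (0:ℝ) ∈ Icc (-c) c := ⟨by linarith, hc⟩
  have hE := sn_energy_Icc (by linarith) hc hg h0
  have hp : ‖g c‖ ≤ 1 := sn_norm_le (hE c ⟨hcneg, le_rfl⟩)
  have hm : ‖g (-c)‖ ≤ 1 := sn_norm_le (hE (-c) ⟨le_rfl, hcneg⟩)
  obtain ⟨fp, fp0, fpd⟩ := (snV_picard c (g c) hp).exists_eq_forall_mem_Icc_hasDerivWithinAt₀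
  obtain ⟨fm, fm0, fmd⟩ :=
    (snV_picard (-c) (g (-c)) hm).exists_eq_forall_mem_Icc_hasDerivWithinAt₀
  set G : ℝ → ℝ × ℝ := fun t => if t < -c then fm t else if t ≤ c then g t else fp t with hGdef
  have Eg : EqOn G g (Icc (-c) c) := fun t ht => by
    simp only [hGdef]; rw [if_neg (not_lt.mpr ht.1), if_pos ht.2]
  have Ep : EqOn G fp (Icc c (c + 16⁻¹)) := fun t ht => by
    simp only [hGdef]
    rcases eq_or_lt_of_le ht.1 with h | h
    · subst h
      rw [if_neg (by linarith : ¬ c < -c), if_pos le_rfl]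
      exact fp0.symm
    · rw [if_neg (by linarith : ¬ t < -c), if_neg (by linarith : ¬ t ≤ c)]
  have Em : EqOn G fm (Icc (-c - 16⁻¹) (-c)) := fun t ht => by
    simp only [hGdef]
    rcases lt_or_eq_of_le ht.2 with h | h
    · rw [if_pos h]
    · rw [h, if_neg (lt_irrefl _), if_pos hcneg, ← fm0]
  have piece : ∀ (S : Set ℝ) (h : ℝ → ℝ × ℝ), IsClosed S → EqOn G h S →
      (∀ u ∈ S, HasDerivWithinAt h (snV (h u)) S u) →
      ∀ u : ℝ, HasDerivWithinAt G (snV (G u)) S u := by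
    intro S h hS hEq hsol u
    by_cases huS : u ∈ S
    · have h2 := (hsol u huS).congr (fun x hx => hEq hx) (hEq huS)
      rwa [← hEq huS] at h2
    · rw [hasDerivWithinAt_iff_hasFDerivWithinAt]
      exact HasFDerivWithinAt.of_notMem_closure (by rwa [hS.closure_eq])
  have hfp' : ∀ u ∈ Icc c (c + 16⁻¹), HasDerivWithinAt fp (snV (fp u)) (Icc c (c + 16⁻¹)) u :=
    fun u hu => (fpd u ⟨by linarith [hu.1], hu.2⟩).mono (Icc_subset_Icc (by linarith) le_rfl)
  have hfm' : ∀ u ∈ Icc (-c - 16⁻¹) (-c),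
      HasDerivWithinAt fm (snV (fm u)) (Icc (-c - 16⁻¹) (-c)) u :=
    fun u hu => (fmd u ⟨hu.1, by linarith [hu.2]⟩).mono (Icc_subset_Icc le_rfl (by linarith))
  have hsets : (Icc (-c - 16⁻¹) (-c) ∪ Icc (-c) c) ∪ Icc c (c + 16⁻¹)
      = Icc (-(c + 16⁻¹)) (c + 16⁻¹) := by
    rw [Icc_union_Icc_eq_Icc (by linarith) hcneg,
      Icc_union_Icc_eq_Icc (by linarith) (by linarith),
      show -c - 16⁻¹ = -(c + 16⁻¹) by ring]
  refine ⟨G, (Eg h0I).trans h0, fun t ht => ?_⟩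
  have H1 := piece _ fm isClosed_Icc Em hfm' t
  have H2 := piece _ g isClosed_Icc Eg (fun u hu => hg u hu) t
  have H3 := piece _ fp isClosed_Icc Ep hfp' t
  have Hu := (H1.union H2).union H3
  rwa [hsets] at Hu

lemma sn_exists_sol (n : ℕ) : ∃ g : ℝ → ℝ × ℝ, g 0 = (0, 1) ∧
    ∀ t ∈ Icc (-(((n : ℝ) + 1) * 16⁻¹)) (((n : ℝ) + 1) * 16⁻¹),
      HasDerivWithinAt g (snV (g t)) (Icc (-(((n : ℝ) + 1) * 16⁻¹)) (((n : ℝ) + 1) * 16⁻¹)) t := by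
  induction n with
  | zero =>
    have hn : ‖((0 : ℝ), (1 : ℝ))‖ ≤ 1 := by
      rw [Prod.norm_def]
      simp
    obtain ⟨g, hg0, hgd⟩ := (snV_picard 0 _ hn).exists_eq_forall_mem_Icc_hasDerivWithinAt₀
    refine ⟨g, hg0, ?_⟩
    rw [show -((((0:ℕ):ℝ) + 1) * 16⁻¹) = 0 - 16⁻¹ by norm_num,
      show (((0:ℕ):ℝ) + 1) * 16⁻¹ = 0 + 16⁻¹ by norm_num]
    exact hgd
  | succ n ih =>
    obtain ⟨g, hg0, hgd⟩ := ih
    obtain ⟨G, hG0, hGd⟩ := sn_glue (c := ((n:ℝ) + 1) * 16⁻¹) (by positivity) hg0 hgd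
    refine ⟨G, hG0, ?_⟩
    rw [show ((((n+1):ℕ):ℝ) + 1) * 16⁻¹ = ((n:ℝ) + 1) * 16⁻¹ + 16⁻¹ by push_cast; ring]
    exact hGd

/-- A global solution curve. -/
lemma sn_exists_global : ∃ G : ℝ → ℝ × ℝ, G 0 = (0, 1) ∧
    ∀ t : ℝ, HasDerivAt G (snV (G t)) t := by
  choose gs hgs0 hgsd using sn_exists_sol
  have hmono : ∀ m k : ℕ, m ≤ k → ((m:ℝ) + 1) * 16⁻¹ ≤ ((k:ℝ) + 1) * 16⁻¹ := by
    intro m k hmk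
    have : (m:ℝ) ≤ (k:ℝ) := Nat.cast_le.mpr hmk
    linarith
  have compat : ∀ m k : ℕ, m ≤ k →
      EqOn (gs m) (gs k) (Icc (-(((m:ℝ) + 1) * 16⁻¹)) (((m:ℝ) + 1) * 16⁻¹)) := by
    intro m k hmk
    have hpos : (0:ℝ) < ((m:ℝ) + 1) * 16⁻¹ := by positivity
    have hsub : Icc (-(((m:ℝ) + 1) * 16⁻¹)) (((m:ℝ) + 1) * 16⁻¹) ⊆
        Icc (-(((k:ℝ) + 1) * 16⁻¹)) (((k:ℝ) + 1) * 16⁻¹) :=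
      Icc_subset_Icc (neg_le_neg (hmono m k hmk)) (hmono m k hmk)
    exact sn_uniq_Icc (by linarith) hpos (hgsd m) (hgs0 m)
      (fun t ht => (hgsd k t (hsub ht)).mono hsub) (hgs0 k)
  set N : ℝ → ℕ := fun t => ⌈|t| * 16⌉₊ with hN
  have habs : ∀ t : ℝ, |t| < ((N t : ℝ) + 1) * 16⁻¹ := by
    intro t
    have h1 : |t| * 16 ≤ (N t : ℝ) := Nat.le_ceil _
    nlinarith [abs_nonneg t]
  have hmem : ∀ t : ℝ, ∀ k : ℕ, N t ≤ k →
      t ∈ Icc (-(((N t : ℝ) + 1) * 16⁻¹)) (((N t : ℝ) + 1) * 16⁻¹) := by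
    intro t k _
    have := habs t
    obtain ⟨h1, h2⟩ := abs_lt.mp this
    exact ⟨h1.le, h2.le⟩
  set f : ℝ → ℝ × ℝ := fun t => gs (N t) t with hf
  have key : ∀ t : ℝ, ∀ k : ℕ, N t ≤ k → f t = gs k t := by
    intro t k hk
    exact compat (N t) k hk (hmem t k hk)
  refine ⟨f, by simpa [hf] using hgs0 (N 0), fun u => ?_⟩
  set n : ℕ := ⌈(|u| + 1) * 16⌉₊ with hn
  have hNn : ∀ s : ℝ, s ∈ Metric.ball u 1 → N s ≤ n := by
    intro s hs
    rw [Metric.mem_ball, Real.dist_eq] at hs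
    apply Nat.ceil_le_ceil
    have : |s| ≤ |u| + 1 := by
      have := abs_sub_abs_le_abs_sub s u
      linarith
    nlinarith
  have hNu : N u ≤ n := hNn u (by simp [Metric.mem_ball])
  have hEq : f =ᶠ[nhds u] gs n := by
    filter_upwards [Metric.ball_mem_nhds u one_pos] with s hs
    exact key s n (hNn s hs)
  have huIoo : u ∈ Ioo (-(((n:ℝ) + 1) * 16⁻¹)) (((n:ℝ) + 1) * 16⁻¹) := by
    have h1 := habs u
    have h2 : ((N u : ℝ) + 1) * 16⁻¹ ≤ ((n:ℝ) + 1) * 16⁻¹ := hmono _ _ hNu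
    obtain ⟨ha, hb⟩ := abs_lt.mp (lt_of_lt_of_le h1 h2)
    exact ⟨ha, hb⟩
  have hder : HasDerivAt (gs n) (snV (gs n u)) u :=
    (hgsd n u (Ioo_subset_Icc_self huIoo)).hasDerivAt (Icc_mem_nhds huIoo.1 huIoo.2)
  have := hder.congr_of_eventuallyEq hEq
  rwa [← key u n hNu] at this

/-- Energy conservation for global solutions. -/
lemma sn_energy_global {G : ℝ → ℝ × ℝ} (hG : ∀ t, HasDerivAt G (snV (G t)) t)
    (h0 : G 0 = (0, 1)) : ∀ t, (G t).1 ^ 4 + (G t).2 ^ 2 = 1 := by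
  set E : ℝ → ℝ := fun t => (G t).1 ^ 4 + (G t).2 ^ 2 with hE
  have hder : ∀ t, HasDerivAt E 0 t := by
    intro t
    have h1 : HasDerivAt (fun u => (G u).1) ((G t).2) t := by
      simpa [snV, Function.comp_def] using (ContinuousLinearMap.fst ℝ ℝ ℝ).hasFDerivAt.comp_hasDerivAt t (hG t)
    have h2 : HasDerivAt (fun u => (G u).2) (-2 * (G t).1 ^ 3) t := by
      simpa [snV, Function.comp_def] using (ContinuousLinearMap.snd ℝ ℝ ℝ).hasFDerivAt.comp_hasDerivAt t (hG t)
    have hsum := (h1.pow 4).add (h2.pow 2)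
    refine hsum.congr_deriv ?_
    push_cast
    ring
  intro t
  have hconst : E t = E 0 :=
    is_const_of_deriv_eq_zero (fun x => (hder x).differentiableAt) (fun x => (hder x).deriv) t 0
  have : E 0 = 1 := by simp [hE, h0]
  show E t = 1
  linarith

/-- Global uniqueness. -/
lemma sn_uniq_global {G₁ G₂ : ℝ → ℝ × ℝ}
    (h₁ : ∀ t, HasDerivAt G₁ (snV (G₁ t)) t) (e₁ : G₁ 0 = (0, 1))
    (h₂ : ∀ t, HasDerivAt G₂ (snV (G₂ t)) t) (e₂ : G₂ 0 = (0, 1)) : G₁ = G₂ := by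
  have hE₁ := sn_energy_global h₁ e₁
  have hE₂ := sn_energy_global h₂ e₂
  funext u
  have h0mem : (0:ℝ) ∈ Ioo (-(|u| + 1)) (|u| + 1) := by
    have : (0:ℝ) < |u| + 1 := by positivity
    exact ⟨by linarith, this⟩
  exact ODE_solution_unique_of_mem_Ioo (v := fun _ => snV) (s := fun _ => closedBall 0 2)
    (fun _ _ => snV_lipschitz) h0mem
    (fun t _ => ⟨h₁ t, mem_closedBall_zero_iff.mpr ((sn_norm_le (hE₁ t)).trans one_le_two)⟩)
    (fun t _ => ⟨h₂ t, mem_closedBall_zero_iff.mpr ((sn_norm_le (hE₂ t)).trans one_le_two)⟩)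
    (e₁.trans e₂.symm) (abs_lt.mp (lt_add_one |u|) |> fun h => ⟨h.1, h.2⟩)

/-- A candidate real solution gives a solution curve. -/
lemma sn_curve_of_sol {f : ℝ → ℝ} (hf : ContDiff ℝ 2 f)
    (hode : ∀ u : ℝ, deriv (deriv f) u = -2 * f u ^ 3) :
    ∀ t, HasDerivAt (fun u => (f u, deriv f u)) (snV (f t, deriv f t)) t := by
  have h2 : ContDiff ℝ ((1 : WithTop ℕ∞) + 1) f := by
    rw [show ((1 : WithTop ℕ∞) + 1) = 2 from by norm_num]
    exact hf
  have hdF : Differentiable ℝ f := h2.differentiable (by norm_num)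
  have hd' : Differentiable ℝ (deriv f) :=
    (contDiff_succ_iff_deriv.mp h2).2.2.differentiable (by norm_num)
  intro t
  have ha : HasDerivAt f (deriv f t) t := (hdF t).hasDerivAt
  have hb : HasDerivAt (deriv f) (-2 * f t ^ 3) t := by
    have := (hd' t).hasDerivAt
    rwa [hode t] at this
  exact ha.prodMk hb

/-- A global curve gives a C² real solution. -/
lemma sn_sol_of_curve {G : ℝ → ℝ × ℝ} (hG : ∀ t, HasDerivAt G (snV (G t)) t) :
    ContDiff ℝ 2 (fun t => (G t).1) ∧ (deriv (fun t => (G t).1) = fun t => (G t).2) ∧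
      ∀ u, deriv (deriv (fun t => (G t).1)) u = -2 * (G u).1 ^ 3 := by
  have h1 : ∀ t, HasDerivAt (fun u => (G u).1) ((G t).2) t := fun t => by
    simpa [snV, Function.comp_def] using (ContinuousLinearMap.fst ℝ ℝ ℝ).hasFDerivAt.comp_hasDerivAt t (hG t)
  have h2 : ∀ t, HasDerivAt (fun u => (G u).2) (-2 * (G t).1 ^ 3) t := fun t => by
    simpa [snV, Function.comp_def] using (ContinuousLinearMap.snd ℝ ℝ ℝ).hasFDerivAt.comp_hasDerivAt t (hG t)
  have hdF : deriv (fun t => (G t).1) = fun t => (G t).2 := funext fun t => (h1 t).deriv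
  have hFd : Differentiable ℝ (fun t => (G t).1) := fun t => (h1 t).differentiableAt
  have hFc : Continuous (fun t => (G t).1) := hFd.continuous
  refine ⟨?_, hdF, ?_⟩
  · rw [show (2 : WithTop ℕ∞) = 1 + 1 from by norm_num, contDiff_succ_iff_deriv]
    refine ⟨fun t => (h1 t).differentiableAt, by simp, ?_⟩
    rw [hdF, contDiff_one_iff_deriv]
    refine ⟨fun t => (h2 t).differentiableAt, ?_⟩
    have hdd : deriv (fun t => (G t).2) = fun t => -2 * (G t).1 ^ 3 :=
      funext fun t => (h2 t).deriv
    rw [hdd]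
    exact continuous_const.mul (hFc.pow 3)
  · intro u
    rw [hdF]
    exact (h2 u).deriv

end SnAux

/-- There is a unique global `C²` solution of `f'' = -2f³`,
`f(0) = 0`, `f'(0) = 1` (the Jacobi elliptic function `sn(·, i)`), and it
satisfies `|f| ≤ 1` and `|f'| ≤ 1` everywhere. -/
theorem sn_exists_unique_and_bounded :
    (∃! f : ℝ → ℝ, ContDiff ℝ 2 f ∧ (∀ u : ℝ, deriv (deriv f) u = -2 * f u ^ 3)
      ∧ f 0 = 0 ∧ deriv f 0 = 1) ∧
    ∀ f : ℝ → ℝ, (ContDiff ℝ 2 f ∧ (∀ u : ℝ, deriv (deriv f) u = -2 * f u ^ 3)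
      ∧ f 0 = 0 ∧ deriv f 0 = 1) →
      ∀ u : ℝ, |f u| ≤ 1 ∧ |deriv f u| ≤ 1 := by
  obtain ⟨G, hG0, hG⟩ := sn_exists_global
  obtain ⟨hC2, hd1, hd2⟩ := sn_sol_of_curve hG
  constructor
  · refine ⟨fun t => (G t).1, ⟨hC2, by simpa using hd2, by simp [hG0], by simp [hd1, hG0]⟩, ?_⟩
    rintro f ⟨hf2, hode, hf0, hf1⟩
    have hcurve := sn_curve_of_sol hf2 hode
    have : (fun u => (f u, deriv f u)) = G :=
      sn_uniq_global hcurve (by simp [hf0, hf1]) hG hG0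
    funext u
    have := congrFun this u
    exact (congrArg Prod.fst this).symm ▸ rfl
  · rintro f ⟨hf2, hode, hf0, hf1⟩ u
    have hcurve := sn_curve_of_sol hf2 hode
    have hE := sn_energy_global hcurve (by simp [hf0, hf1]) u
    exact sn_bound_of_energy hE
end

section
/- Let f : ℝ → ℝ be the unique solution of f'' = -2f³ with f(0) = 0, f'(0) = 1. Set K = ∫₀¹ dx/√(1 - x⁴). Then K is finite, f is strictly increasing on [0, K], f(K) = 1, f'(K) = 0, and K is the smallest positive zero of f'. -/
open Set MeasureTheory intervalIntegral

lemma sn_aux_integrable :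
    IntervalIntegrable (fun x => 1 / Real.sqrt (1 - x ^ 4)) MeasureTheory.volume 0 1 := by
  have hmaj : IntervalIntegrable (fun x : ℝ => (1 - x) ^ (-(1/2) : ℝ)) volume 0 1 := by
    have h := intervalIntegrable_rpow' (a := 0) (b := 1) (r := -(1/2)) (by norm_num)
    have := (h.comp_sub_left 1).symm
    simpa using this
  refine hmaj.mono_fun ?_ ?_
  · refine (Measurable.aestronglyMeasurable ?_).restrict
    exact (measurable_const.div ((Real.continuous_sqrt.measurable).comp
      ((measurable_const.sub (measurable_id.pow_const 4)))))
  · filter_upwards [ae_restrict_mem measurableSet_uIoc] with x hx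
    rw [Set.uIoc_of_le (by norm_num : (0:ℝ) ≤ 1)] at hx
    obtain ⟨hx0, hx1⟩ := hx
    simp only [Real.norm_eq_abs]
    rcases lt_or_eq_of_le hx1 with h | h
    · have hx4 : x ^ 4 ≤ x := by
        calc x ^ 4 ≤ x ^ 1 := pow_le_pow_of_le_one hx0.le hx1 (by norm_num)
        _ = x := pow_one x
      rw [abs_of_nonneg (by positivity),
        abs_of_nonneg (Real.rpow_nonneg (by linarith) _)]
      rw [Real.rpow_neg (by linarith), ← Real.sqrt_eq_rpow, one_div]
      apply inv_anti₀
      · exact Real.sqrt_pos.mpr (by linarith)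
      · apply Real.sqrt_le_sqrt; linarith
    · subst h
      norm_num [Real.rpow_neg_one]


/-- For the unique solution `f` of `f'' = -2f³`, `f(0)=0`, `f'(0)=1`,
the quantity `K = ∫₀¹ dx/√(1-x⁴)` is finite, `f` is strictly increasing on `[0,K]`,
`f(K) = 1`, `f'(K) = 0`, and `K` is the smallest positive zero of `f'`. -/
theorem sn_quarter_period
    (f : ℝ → ℝ) (hf : ContDiff ℝ 2 f)
    (hODE : ∀ u : ℝ, deriv (deriv f) u = -2 * f u ^ 3)
    (h0 : f 0 = 0) (h1 : deriv f 0 = 1)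
    (K : ℝ) (hK : K = ∫ x in (0:ℝ)..1, 1 / Real.sqrt (1 - x ^ 4)) :
    IntervalIntegrable (fun x => 1 / Real.sqrt (1 - x ^ 4)) MeasureTheory.volume 0 1 ∧
    StrictMonoOn f (Set.Icc 0 K) ∧
    f K = 1 ∧
    deriv f K = 0 ∧
    IsLeast {u : ℝ | 0 < u ∧ deriv f u = 0} K := by
  -- basic differentiability facts
  have hf1 : Differentiable ℝ f := hf.differentiable (by norm_num)
  have hf2 : ContDiff ℝ 1 (deriv f) := by
    have h11 : ContDiff ℝ (1+1) f := by
      convert hf using 2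
      norm_num
    exact (contDiff_succ_iff_deriv.mp h11).2.2
  have hf2' : Differentiable ℝ (deriv f) := hf2.differentiable (by norm_num)
  have hfc : Continuous f := hf1.continuous
  have hfc' : Continuous (deriv f) := hf2'.continuous
  have hd : ∀ u : ℝ, HasDerivAt (deriv f) (-2 * f u ^ 3) u := by
    intro u
    have := (hf2' u).hasDerivAt
    rwa [hODE u] at this
  -- energy conservation
  have energy : ∀ u : ℝ, deriv f u ^ 2 + f u ^ 4 = 1 := by
    have hE : ∀ u : ℝ, HasDerivAt (fun u => deriv f u ^ 2 + f u ^ 4) 0 u := by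
      intro u
      have h2 : HasDerivAt (fun u => deriv f u ^ 2)
          ((2 : ℕ) * deriv f u ^ 1 * (-2 * f u ^ 3)) u := (hd u).pow 2
      have h4 : HasDerivAt (fun u => f u ^ 4)
          ((4 : ℕ) * f u ^ 3 * deriv f u) u := (hf1 u).hasDerivAt.pow 4
      have : HasDerivAt (fun u => deriv f u ^ 2 + f u ^ 4) _ u := h2.add h4
      convert this using 1
      push_cast
      ring
    intro u
    have hconst : ∀ v : ℝ, deriv f v ^ 2 + f v ^ 4 = deriv f 0 ^ 2 + f 0 ^ 4 := by
      intro v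
      exact is_const_of_deriv_eq_zero (fun x => (hE x).differentiableAt)
        (fun x => (hE x).deriv) v 0
    rw [hconst u, h0, h1]; norm_num
  set S : Set ℝ := {u : ℝ | 0 < u ∧ deriv f u = 0} with hS
  -- if deriv f has no zero on (0, t], then deriv f > 0 on [0, t]
  have pos_of_no_zero : ∀ t : ℝ, (∀ u, 0 < u → u ≤ t → deriv f u ≠ 0) →
      ∀ u, 0 ≤ u → u ≤ t → 0 < deriv f u := by
    intro t hnz u hu0 hut
    by_contra hle
    push_neg at hle
    have hu0' : 0 < u := by
      rcases hu0.lt_or_eq with h | h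
      · exact h
      · rw [← h, h1] at hle; linarith
    have : (0:ℝ) ∈ Icc (deriv f u) (deriv f 0) := by
      constructor
      · exact hle
      · rw [h1]; norm_num
    obtain ⟨c, hc, hc0⟩ := intermediate_value_Icc' hu0 hfc'.continuousOn this
    have hc0' : 0 < c := by
      rcases hc.1.lt_or_eq with h | h
      · exact h
      · rw [← h, h1] at hc0; norm_num at hc0
    exact hnz c hc0' (hc.2.trans hut) hc0
  -- S is nonempty
  have hSne : S.Nonempty := by
    by_contra hemp
    rw [Set.not_nonempty_iff_eq_empty] at hemp
    have hnz : ∀ u : ℝ, 0 < u → deriv f u ≠ 0 := by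
      intro u hu hz
      have : u ∈ S := ⟨hu, hz⟩
      rw [hemp] at this; exact this
    have hpos : ∀ u : ℝ, 0 ≤ u → 0 < deriv f u := fun u hu =>
      pos_of_no_zero u (fun v hv _ => hnz v hv) u hu le_rfl
    -- f is strictly increasing on [0, ∞)
    have hmono : StrictMonoOn f (Ici 0) :=
      strictMonoOn_of_deriv_pos (convex_Ici 0) hfc.continuousOn
        (fun x hx => hpos x (le_of_lt (by simpa using hx)))
    set c := f 1 with hc
    have hcpos : 0 < c := by
      have := hmono (self_mem_Ici) (by norm_num : (1:ℝ) ∈ Ici 0) one_pos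
      rwa [h0] at this
    -- for t ≥ 1, f t ≥ c
    have hfge : ∀ t : ℝ, 1 ≤ t → c ≤ f t := by
      intro t ht
      rcases ht.lt_or_eq with h | h
      · exact (hmono (by norm_num : (1:ℝ) ∈ Ici 0) (by simp [le_trans zero_le_one ht] : t ∈ Ici 0) h).le
      · rw [← h]
    -- h := deriv f + 2c³(t-1) is antitone on [1, ∞)
    have hanti : AntitoneOn (fun t => deriv f t + 2 * c ^ 3 * (t - 1)) (Ici 1) := by
      apply antitoneOn_of_deriv_nonpos (convex_Ici 1)
      · exact (hfc'.add (by continuity)).continuousOn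
      · intro x hx
        exact ((hf2' x).add (by fun_prop)).differentiableWithinAt
      · intro x hx
        have hx1 : (1:ℝ) < x := by simpa using hx
        have hder : HasDerivAt (fun t => deriv f t + 2 * c ^ 3 * (t - 1))
            (-2 * f x ^ 3 + 2 * c ^ 3 * 1) x :=
          (hd x).add (((hasDerivAt_id x).sub_const 1).const_mul (2 * c ^ 3))
        rw [(hder.deriv)]
        have : c ^ 3 ≤ f x ^ 3 := pow_le_pow_left₀ hcpos.le (hfge x hx1.le) 3
        nlinarith
    set t₀ : ℝ := 1 + (deriv f 1 + 1) / (2 * c ^ 3) with ht₀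
    have h2c : 0 < 2 * c ^ 3 := by positivity
    have ht₀1 : 1 ≤ t₀ := by
      have : 0 ≤ (deriv f 1 + 1) / (2 * c ^ 3) := by
        apply div_nonneg _ h2c.le
        have := hpos 1 zero_le_one
        linarith
      rw [ht₀]; linarith
    have := hanti (self_mem_Ici) (by simpa using ht₀1) ht₀1
    have hval : 2 * c ^ 3 * (t₀ - 1) = deriv f 1 + 1 := by
      rw [ht₀]; field_simp; ring
    have : deriv f t₀ ≤ -1 := by
      simp only at this
      rw [hval] at this
      linarith
    have := hpos t₀ (le_trans zero_le_one ht₀1)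
    linarith
  have hbdd : BddBelow S := ⟨0, fun u hu => hu.1.le⟩
  set T : ℝ := sInf S with hT
  have hTz : deriv f T = 0 := by
    have hcl : closure S ⊆ {x : ℝ | deriv f x = 0} := by
      apply closure_minimal _ (isClosed_eq hfc' continuous_const)
      exact fun u hu => hu.2
    exact hcl (csInf_mem_closure hSne hbdd)
  have hT0 : 0 < T := by
    have hmem : {x : ℝ | 0 < deriv f x} ∈ nhds (0:ℝ) := by
      have ht := hfc'.continuousAt (x := (0:ℝ))
      have : Ioi (0:ℝ) ∈ nhds (deriv f 0) := by
        rw [h1]; exact Ioi_mem_nhds one_pos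
      exact ht this
    obtain ⟨ε, hε, hball⟩ := Metric.mem_nhds_iff.mp hmem
    have hlb : ∀ u ∈ S, ε / 2 ≤ u := by
      intro u hu
      by_contra hlt
      push_neg at hlt
      have : u ∈ Metric.ball (0:ℝ) ε := by
        rw [Metric.mem_ball, Real.dist_eq, sub_zero, abs_of_pos hu.1]
        linarith
      have := hball this
      rw [Set.mem_setOf_eq, hu.2] at this
      exact lt_irrefl 0 this
    have := le_csInf hSne hlb
    linarith
  -- deriv f > 0 on [0, T)
  have hdfpos : ∀ s : ℝ, 0 ≤ s → s < T → 0 < deriv f s := by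
    intro s hs0 hsT
    refine pos_of_no_zero s (fun u hu hus hz => ?_) s hs0 le_rfl
    have : T ≤ u := csInf_le hbdd ⟨hu, hz⟩
    linarith
  have hmonoT : StrictMonoOn f (Icc 0 T) := by
    apply strictMonoOn_of_deriv_pos (convex_Icc 0 T) hfc.continuousOn
    intro x hx
    rw [interior_Icc] at hx
    exact hdfpos x hx.1.le hx.2
  have hfT : f T = 1 := by
    have e := energy T
    rw [hTz] at e
    have hfT0 : 0 < f T := by
      have := hmonoT (left_mem_Icc.mpr hT0.le) (right_mem_Icc.mpr hT0.le) hT0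
      rwa [h0] at this
    have hfac : (f T - 1) * ((f T + 1) * (f T ^ 2 + 1)) = 0 := by linear_combination e
    have hpos' : 0 < (f T + 1) * (f T ^ 2 + 1) := by positivity
    have := mul_eq_zero.mp hfac
    rcases this with h | h
    · linarith
    · linarith
  have hfnn : ∀ t : ℝ, 0 ≤ t → t ≤ T → 0 ≤ f t := by
    intro t ht0 htT
    rcases ht0.lt_or_eq with h | h
    · have := hmonoT (left_mem_Icc.mpr hT0.le) ⟨ht0, htT⟩ h
      linarith [h0]
    · rw [← h, h0]
  -- the key change-of-variables identity
  have key : ∀ t : ℝ, 0 ≤ t → t < T →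
      (∫ x in (0:ℝ)..f t, 1 / Real.sqrt (1 - x ^ 4)) = t := by
    intro t ht0 htT
    have hft1 : f t < 1 := by
      have e := energy t
      have hdt : 0 < deriv f t := hdfpos t ht0 htT
      by_contra hge
      push_neg at hge
      have : 1 ≤ f t ^ 4 := one_le_pow₀ hge
      nlinarith
    have himg : ∀ x ∈ Set.uIcc (0:ℝ) t, f x ∈ Icc (0:ℝ) (f t) := by
      intro x hx
      rw [Set.uIcc_of_le ht0] at hx
      constructor
      · exact hfnn x hx.1 (le_trans hx.2 htT.le)
      · exact hmonoT.monotoneOn ⟨hx.1, le_trans hx.2 htT.le⟩ ⟨ht0, htT.le⟩ hx.2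
    have hcontg : ContinuousOn (fun x => 1 / Real.sqrt (1 - x ^ 4)) (Icc (0:ℝ) (f t)) := by
      apply ContinuousOn.div continuousOn_const
      · exact (Real.continuous_sqrt.comp (continuous_const.sub (continuous_pow 4))).continuousOn
      · intro x hx
        have hft4 : f t ^ 4 < 1 :=
          pow_lt_one₀ (hfnn t ht0 htT.le) hft1 (by norm_num)
        have hx4 : x ^ 4 < 1 :=
          lt_of_le_of_lt (pow_le_pow_left₀ hx.1 hx.2 4) hft4
        rw [Real.sqrt_ne_zero']
        linarith
    have hcov := intervalIntegral.integral_comp_smul_deriv' (a := 0) (b := t)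
      (f := f) (f' := deriv f) (g := fun x => 1 / Real.sqrt (1 - x ^ 4))
      (fun x _ => (hf1 x).hasDerivAt) hfc'.continuousOn
      (hcontg.mono (Set.image_subset_iff.mpr himg))
    rw [h0] at hcov
    rw [← hcov]
    have hone : Set.EqOn (fun s => deriv f s • ((fun x => 1 / Real.sqrt (1 - x ^ 4)) ∘ f) s)
        (fun _ => (1:ℝ)) (Set.uIcc (0:ℝ) t) := by
      intro s hs
      rw [Set.uIcc_of_le ht0] at hs
      have hds : 0 < deriv f s := hdfpos s hs.1 (lt_of_le_of_lt hs.2 htT)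
      have : 1 - f s ^ 4 = deriv f s ^ 2 := by linarith [energy s]
      simp only [Function.comp_apply, smul_eq_mul]
      rw [this, Real.sqrt_sq hds.le, one_div, mul_inv_cancel₀ hds.ne']
    rw [intervalIntegral.integral_congr hone]
    simp
  -- T = K via continuity of the primitive
  have hIcc : IntegrableOn (fun x => 1 / Real.sqrt (1 - x ^ 4)) (Icc (0:ℝ) 1) volume :=
    (intervalIntegrable_iff_integrableOn_Icc_of_le (by norm_num)).mp sn_aux_integrable
  have hFcont : ContinuousOn
      (fun y => ∫ x in (0:ℝ)..y, 1 / Real.sqrt (1 - x ^ 4)) (Icc (0:ℝ) 1) := by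
    have := continuousOn_primitive_interval (a := 0) (b := 1) (μ := volume)
      (f := fun x => 1 / Real.sqrt (1 - x ^ 4))
    rw [Set.uIcc_of_le (by norm_num : (0:ℝ) ≤ 1)] at this
    exact this hIcc
  have hmaps : ∀ s ∈ Icc (0:ℝ) T, f s ∈ Icc (0:ℝ) 1 := by
    intro s hs
    refine ⟨hfnn s hs.1 hs.2, ?_⟩
    rcases hs.2.lt_or_eq with h | h
    · exact le_of_lt (by rw [← hfT]; exact hmonoT ⟨hs.1, hs.2⟩ (right_mem_Icc.mpr hT0.le) h)
    · rw [h, hfT]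
  have hφcont : ContinuousOn
      ((fun y => ∫ x in (0:ℝ)..y, 1 / Real.sqrt (1 - x ^ 4)) ∘ f) (Icc 0 T) :=
    hFcont.comp hfc.continuousOn hmaps
  have hne : (nhdsWithin T (Ioo (0:ℝ) T)).NeBot := right_nhdsWithin_Ioo_neBot hT0
  have h1t : Filter.Tendsto ((fun y => ∫ x in (0:ℝ)..y, 1 / Real.sqrt (1 - x ^ 4)) ∘ f)
      (nhdsWithin T (Ioo 0 T)) (nhds K) := by
    have hcw := hφcont T (right_mem_Icc.mpr hT0.le)
    have := hcw.tendsto.mono_left (nhdsWithin_mono T Ioo_subset_Icc_self)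
    have heq : ((fun y => ∫ x in (0:ℝ)..y, 1 / Real.sqrt (1 - x ^ 4)) ∘ f) T = K := by
      simp only [Function.comp_apply, hfT]
      exact hK.symm
    rwa [heq] at this
  have h2t : Filter.Tendsto ((fun y => ∫ x in (0:ℝ)..y, 1 / Real.sqrt (1 - x ^ 4)) ∘ f)
      (nhdsWithin T (Ioo 0 T)) (nhds T) := by
    have hid : Filter.Tendsto (fun s : ℝ => s) (nhdsWithin T (Ioo 0 T)) (nhds T) :=
      Filter.tendsto_id.mono_left nhdsWithin_le_nhds
    apply hid.congr'
    filter_upwards [eventually_mem_nhdsWithin] with s hs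
    exact (key s hs.1.le hs.2).symm
  have hTK : T = K := tendsto_nhds_unique h2t h1t
  refine ⟨sn_aux_integrable, ?_, ?_, ?_, ?_, ?_⟩
  · rw [← hTK]; exact hmonoT
  · rw [← hTK]; exact hfT
  · rw [← hTK]; exact hTz
  · rw [← hTK]; exact ⟨hT0, hTz⟩
  · intro u hu
    rw [← hTK]
    exact csInf_le hbdd hu
end

section
/- Let f : ℝ → ℝ be the unique solution of f'' = -2f³ with f(0) = 0, f'(0) = 1, and let K = ∫₀¹ dx/√(1 - x⁴). Then for all u ∈ ℝ: (i) f(-u) = -f(u); (ii) f(2K - u) = f(u); (iii) f(u + 2K) = -f(u); hence (iv) f is periodic with period 4K. -/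
open Set MeasureTheory intervalIntegral Topology Filter

noncomputable def snInt : ℝ → ℝ := fun x => 1 / Real.sqrt (1 - x ^ 4)

lemma snInt_nonneg (x : ℝ) : 0 ≤ snInt x := by
  unfold snInt; positivity

lemma snInt_meas : AEStronglyMeasurable snInt (volume : Measure ℝ) := by
  have : Measurable snInt := by
    unfold snInt
    simp only [one_div]
    exact ((continuous_const.sub (continuous_pow 4)).sqrt.measurable).inv
  exact this.aestronglyMeasurable

lemma snInt_integrable : IntervalIntegrable snInt volume 0 1 := by
  have hbase : IntervalIntegrable (fun x : ℝ => x ^ (-(1/2) : ℝ)) volume 0 1 :=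
    intervalIntegrable_rpow' (by norm_num)
  have hcomp : IntervalIntegrable (fun x : ℝ => (1 - x) ^ (-(1/2) : ℝ)) volume 0 1 := by
    have := (hbase.comp_sub_left 1).symm
    simpa using this
  refine hcomp.mono_fun snInt_meas.restrict ?_
  rw [Filter.EventuallyLE, ae_restrict_iff' measurableSet_uIoc]
  filter_upwards with x hx
  rw [uIoc_of_le (by norm_num : (0:ℝ) ≤ 1)] at hx
  obtain ⟨hx0, hx1⟩ := hx
  rw [Real.norm_eq_abs, Real.norm_eq_abs, abs_of_nonneg (snInt_nonneg x),
    abs_of_nonneg (Real.rpow_nonneg (by linarith) _)]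
  have h1 : (1 - x) ^ (-(1/2) : ℝ) = 1 / Real.sqrt (1 - x) := by
    rw [Real.rpow_neg (by linarith), Real.sqrt_eq_rpow, one_div]
    norm_num
  rw [h1]
  unfold snInt
  rcases eq_or_lt_of_le hx1 with h | h
  · subst h; norm_num
  · have hx3 : x ^ 3 ≤ 1 := pow_le_one₀ hx0.le hx1
    have h4 : 1 - x ≤ 1 - x ^ 4 := by nlinarith [mul_le_of_le_one_right hx0.le hx3]
    have hs : Real.sqrt (1 - x) ≤ Real.sqrt (1 - x ^ 4) := Real.sqrt_le_sqrt h4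
    have hpos : 0 < Real.sqrt (1 - x) := Real.sqrt_pos.mpr (by linarith)
    exact one_div_le_one_div_of_le hpos hs

noncomputable def snF : ℝ → ℝ := fun y => ∫ x in (0:ℝ)..y, snInt x

lemma snInt_integrable' {y : ℝ} (hy : y ∈ Icc (0:ℝ) 1) :
    IntervalIntegrable snInt volume 0 y := by
  apply snInt_integrable.mono_set
  rw [uIcc_of_le hy.1, uIcc_of_le (by norm_num : (0:ℝ) ≤ 1)]
  exact Icc_subset_Icc le_rfl hy.2

lemma snF_cont : ContinuousOn snF (Icc 0 1) := by
  have := continuousOn_primitive_interval (a := (0:ℝ)) (b := 1) (μ := volume)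
    (f := snInt) ?_
  · rwa [uIcc_of_le (by norm_num : (0:ℝ) ≤ 1)] at this
  · rw [uIcc_of_le (by norm_num : (0:ℝ) ≤ 1)]
    exact (intervalIntegrable_iff_integrableOn_Icc_of_le (by norm_num)).mp snInt_integrable

lemma snF_le {y : ℝ} (hy : y ∈ Icc (0:ℝ) 1) : snF y ≤ snF 1 := by
  have hint2 : IntervalIntegrable snInt volume y 1 := by
    apply snInt_integrable.mono_set
    rw [uIcc_of_le hy.2, uIcc_of_le (by norm_num : (0:ℝ) ≤ 1)]
    exact Icc_subset_Icc hy.1 le_rfl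
  have h1 : snF y + (∫ x in y..(1:ℝ), snInt x) = snF 1 :=
    intervalIntegral.integral_add_adjacent_intervals (snInt_integrable' hy) hint2
  have h2 : 0 ≤ ∫ x in y..(1:ℝ), snInt x :=
    intervalIntegral.integral_nonneg hy.2 (fun u _ => snInt_nonneg u)
  linarith

lemma snInt_contAt {y : ℝ} (hy : y ^ 4 < 1) : ContinuousAt snInt y := by
  unfold snInt
  apply ContinuousAt.div continuousAt_const
  · exact (Real.continuous_sqrt.comp (continuous_const.sub (continuous_pow 4))).continuousAt
  · exact ne_of_gt (Real.sqrt_pos.mpr (by linarith))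

lemma snF_hasDeriv {y : ℝ} (hy0 : 0 ≤ y) (hy : y ^ 4 < 1) :
    HasDerivAt snF (snInt y) y := by
  have hy1 : y ≤ 1 := by
    by_contra hc
    push_neg at hc
    nlinarith [pow_lt_pow_left₀ hc zero_le_one (by norm_num : (4:ℕ) ≠ 0)]
  exact intervalIntegral.integral_hasDerivAt_right (snInt_integrable' ⟨hy0, hy1⟩)
    ⟨univ, Filter.univ_mem, snInt_meas.restrict⟩ (snInt_contAt hy)

lemma sn_diff {f : ℝ → ℝ} (hf : ContDiff ℝ 2 f) :
    Differentiable ℝ f ∧ Differentiable ℝ (deriv f) := by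
  have h2 : ContDiff ℝ ((1:ℕ) + 1) f := by exact_mod_cast hf
  rw [contDiff_succ_iff_deriv] at h2
  exact ⟨h2.1, h2.2.2.differentiable (by simp)⟩

lemma sn_energy {f : ℝ → ℝ} (hf : ContDiff ℝ 2 f)
    (hfO : ∀ u, deriv (deriv f) u = -2 * f u ^ 3) (u a : ℝ) :
    (deriv f u) ^ 2 + f u ^ 4 = (deriv f a) ^ 2 + f a ^ 4 := by
  obtain ⟨hd1, hd2⟩ := sn_diff hf
  have hE : ∀ x : ℝ, HasDerivAt (fun t => (deriv f t) ^ 2 + f t ^ 4) 0 x := by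
    intro x
    have h1 := ((hd2 x).hasDerivAt.fun_pow 2).fun_add ((hd1 x).hasDerivAt.fun_pow 4)
    refine h1.congr_deriv ?_
    rw [hfO x]; ring
  exact is_const_of_deriv_eq_zero (fun x => (hE x).differentiableAt)
    (fun x => (hE x).deriv) u a

lemma sn_bnd4 {x C : ℝ} (h : x ^ 4 ≤ C) : |x| ≤ 1 + C := by
  have hC : 0 ≤ C := le_trans (by positivity) h
  rcases le_or_gt |x| 1 with h1 | h1
  · linarith
  · have h2 : |x| ≤ |x| ^ 4 := le_self_pow₀ h1.le (by norm_num)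
    have h3 : |x| ^ 4 = x ^ 4 := by
      rw [← abs_pow]; exact abs_of_nonneg (by positivity)
    linarith

lemma sn_bnd2 {x C : ℝ} (h : x ^ 2 ≤ C) : |x| ≤ 1 + C := by
  have hC : 0 ≤ C := le_trans (by positivity) h
  rcases le_or_gt |x| 1 with h1 | h1
  · linarith
  · have h2 : |x| ≤ |x| ^ 2 := le_self_pow₀ h1.le (by norm_num)
    have h3 : |x| ^ 2 = x ^ 2 := sq_abs x
    linarith

lemma sn_unique {f g : ℝ → ℝ} (hf : ContDiff ℝ 2 f) (hg : ContDiff ℝ 2 g)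
    (hfO : ∀ u, deriv (deriv f) u = -2 * f u ^ 3)
    (hgO : ∀ u, deriv (deriv g) u = -2 * g u ^ 3)
    (a : ℝ) (he0 : f a = g a) (he1 : deriv f a = deriv g a) : f = g := by
  obtain ⟨hfd1, hfd2⟩ := sn_diff hf
  obtain ⟨hgd1, hgd2⟩ := sn_diff hg
  set C : ℝ := (deriv f a) ^ 2 + f a ^ 4 with hC
  have hC0 : 0 ≤ C := by positivity
  set R : ℝ := 1 + C with hR
  have hR0 : (0:ℝ) ≤ R := by linarith
  -- trajectories
  set pf : ℝ → ℝ × ℝ := fun t => (f t, deriv f t) with hpf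
  set pg : ℝ → ℝ × ℝ := fun t => (g t, deriv g t) with hpg
  have hEf : ∀ u, (deriv f u) ^ 2 + f u ^ 4 = C := fun u => sn_energy hf hfO u a
  have hEg : ∀ u, (deriv g u) ^ 2 + g u ^ 4 = C := fun u => by
    rw [sn_energy hg hgO u a, ← he0, ← he1]
  have hmemf : ∀ t : ℝ, pf t ∈ Metric.closedBall (0 : ℝ × ℝ) R := by
    intro t
    rw [Metric.mem_closedBall, dist_zero_right, Prod.norm_def]
    refine max_le ?_ ?_
    · exact sn_bnd4 (by nlinarith [hEf t, sq_nonneg (deriv f t)])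
    · exact sn_bnd2 (by nlinarith [hEf t, pow_le_pow_left₀ (abs_nonneg (f t)) (le_refl |f t|) 4, sq_nonneg (f t ^ 2)])
  have hmemg : ∀ t : ℝ, pg t ∈ Metric.closedBall (0 : ℝ × ℝ) R := by
    intro t
    rw [Metric.mem_closedBall, dist_zero_right, Prod.norm_def]
    refine max_le ?_ ?_
    · exact sn_bnd4 (by nlinarith [hEg t, sq_nonneg (deriv g t)])
    · exact sn_bnd2 (by nlinarith [hEg t, sq_nonneg (g t ^ 2)])
  -- the vector field
  set v : ℝ → ℝ × ℝ → ℝ × ℝ := fun _ p => (p.2, -2 * p.1 ^ 3) with hv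
  set L : NNReal := (1 + 6 * R ^ 2).toNNReal with hL
  have hLc : (L : ℝ) = 1 + 6 * R ^ 2 := Real.coe_toNNReal _ (by positivity)
  have hlip : ∀ t : ℝ, LipschitzOnWith L (v t) (Metric.closedBall (0 : ℝ × ℝ) R) := by
    intro t
    rw [lipschitzOnWith_iff_dist_le_mul]
    intro p hp q hq
    rw [Metric.mem_closedBall, dist_zero_right, Prod.norm_def] at hp hq
    have hp1 : |p.1| ≤ R := le_trans (le_max_left _ _) hp
    have hq1 : |q.1| ≤ R := le_trans (le_max_left _ _) hq
    rw [Prod.dist_eq, Prod.dist_eq]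
    refine max_le ?_ ?_
    · calc dist p.2 q.2 ≤ max (dist p.1 q.1) (dist p.2 q.2) := le_max_right _ _
        _ ≤ (L : ℝ) * max (dist p.1 q.1) (dist p.2 q.2) := by
            nlinarith [le_max_right (dist p.1 q.1) (dist p.2 q.2), dist_nonneg (x := p.1) (y := q.1), dist_nonneg (x := p.2) (y := q.2), hLc, sq_nonneg R]
    · have h1 : dist (-2 * p.1 ^ 3) (-2 * q.1 ^ 3) = |p.1 - q.1| * (2 * |p.1 ^ 2 + p.1 * q.1 + q.1 ^ 2|) := by
        rw [Real.dist_eq, show -2 * p.1 ^ 3 - -2 * q.1 ^ 3 = (p.1 - q.1) * (-2 * (p.1 ^ 2 + p.1 * q.1 + q.1 ^ 2)) from by ring, abs_mul]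
        rw [show (-2 : ℝ) * (p.1 ^ 2 + p.1 * q.1 + q.1 ^ 2) = -(2 * (p.1 ^ 2 + p.1 * q.1 + q.1 ^ 2)) from by ring, abs_neg, abs_mul]
        norm_num
      have h2 : |p.1 ^ 2 + p.1 * q.1 + q.1 ^ 2| ≤ 3 * R ^ 2 := by
        have hp' := abs_le.mp hp1
        have hq' := abs_le.mp hq1
        rw [abs_le]
        constructor <;> nlinarith
      have h3 : |p.1 - q.1| = dist p.1 q.1 := (Real.dist_eq _ _).symm
      calc dist (-2 * p.1 ^ 3) (-2 * q.1 ^ 3)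
          ≤ dist p.1 q.1 * (6 * R ^ 2) := by
            rw [h1, h3]
            exact mul_le_mul_of_nonneg_left (by linarith) dist_nonneg
        _ ≤ (L : ℝ) * max (dist p.1 q.1) (dist p.2 q.2) := by
            rw [hLc]
            nlinarith [le_max_left (dist p.1 q.1) (dist p.2 q.2), dist_nonneg (x := p.1) (y := q.1), dist_nonneg (x := p.2) (y := q.2), sq_nonneg R]
  have hderf : ∀ t : ℝ, HasDerivAt pf (v t (pf t)) t := by
    intro t
    have := ((hfd1 t).hasDerivAt.prodMk (hfd2 t).hasDerivAt)
    simpa [hpf, hv, hfO t] using this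
  have hderg : ∀ t : ℝ, HasDerivAt pg (v t (pg t)) t := by
    intro t
    have := ((hgd1 t).hasDerivAt.prodMk (hgd2 t).hasDerivAt)
    simpa [hpg, hv, hgO t] using this
  funext u
  have hab : a ∈ Set.Ioo (a - (|u - a| + 1)) (a + (|u - a| + 1)) := by
    constructor <;> nlinarith [abs_nonneg (u - a)]
  have hu : u ∈ Set.Icc (a - (|u - a| + 1)) (a + (|u - a| + 1)) := by
    have := abs_le.mp (le_refl |u - a|)
    constructor <;> nlinarith [neg_abs_le (u - a), le_abs_self (u - a)]
  have heq : EqOn pf pg (Set.Icc (a - (|u - a| + 1)) (a + (|u - a| + 1))) := by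
    apply ODE_solution_unique_of_mem_Icc (fun t _ => hlip t) hab
    · exact (Continuous.prodMk hfd1.continuous hfd2.continuous).continuousOn
    · exact fun t _ => hderf t
    · exact fun t _ => hmemf t
    · exact (Continuous.prodMk hgd1.continuous hgd2.continuous).continuousOn
    · exact fun t _ => hderg t
    · exact fun t _ => hmemg t
    · simp [hpf, hpg, he0, he1]
  have := heq hu
  exact congrArg Prod.fst this

lemma sn_le_one_of_pow4 {x : ℝ} (h : x ^ 4 ≤ 1) : x ≤ 1 := by
  nlinarith [sq_nonneg (x + 1), sq_nonneg (x - 1), sq_nonneg x, sq_nonneg (x ^ 2 - 1)]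

/-- Symmetry and periodicity of the Jacobi elliptic function `sn(·,i)`,
defined as the unique global solution of `f'' = -2f³`, `f(0)=0`, `f'(0)=1`, with
quarter period `K = ∫₀¹ dx/√(1-x⁴)`: it is odd, symmetric about `K`, antiperiodic
with antiperiod `2K`, hence periodic with period `4K`. -/
theorem sn_symmetries_and_periodicity
    (f : ℝ → ℝ) (hf : ContDiff ℝ 2 f)
    (hODE : ∀ u : ℝ, deriv (deriv f) u = -2 * f u ^ 3)
    (h0 : f 0 = 0) (h1 : deriv f 0 = 1)
    (K : ℝ) (hK : K = ∫ x in (0:ℝ)..1, 1 / Real.sqrt (1 - x ^ 4)) :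
    (∀ u : ℝ, f (-u) = -f u) ∧
    (∀ u : ℝ, f (2 * K - u) = f u) ∧
    (∀ u : ℝ, f (u + 2 * K) = -f u) ∧
    Function.Periodic f (4 * K) := by
  obtain ⟨hfd1, hfd2⟩ := sn_diff hf
  have hE : ∀ u : ℝ, (deriv f u) ^ 2 + f u ^ 4 = 1 := by
    intro u; rw [sn_energy hf hODE u 0, h0, h1]; norm_num
  have hK1 : K = snF 1 := by rw [hK]; rfl
  have hK0 : 0 ≤ K := by
    rw [hK1]
    exact intervalIntegral.integral_nonneg (by norm_num) (fun u _ => snInt_nonneg u)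
  -- strict monotonicity from positive derivative
  have hmonoAux : ∀ b : ℝ, (∀ t ∈ Ioo (0:ℝ) b, 0 < deriv f t) → StrictMonoOn f (Icc 0 b) := by
    intro b hpos
    exact strictMonoOn_of_deriv_pos (convex_Icc 0 b) hfd1.continuous.continuousOn
      (fun x hx => by rw [interior_Icc] at hx; exact hpos x hx)
  -- chain rule: F ∘ f = id where f' > 0
  have hchain : ∀ b : ℝ, 0 ≤ b → (∀ t ∈ Icc (0:ℝ) b, 0 < deriv f t) →
      ∀ u ∈ Icc (0:ℝ) b, snF (f u) = u := by
    intro b hb hpos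
    have hfx : ∀ t ∈ Icc (0:ℝ) b, 0 ≤ f t := by
      intro t ht
      rcases eq_or_lt_of_le ht.1 with h | h
      · rw [← h, h0]
      · have := hmonoAux b (fun z hz => hpos z ⟨hz.1.le, hz.2.le⟩)
          ⟨le_rfl, hb⟩ ht h
        rw [h0] at this; exact this.le
    have hf4 : ∀ t ∈ Icc (0:ℝ) b, f t ^ 4 < 1 := by
      intro t ht
      nlinarith [hE t, hpos t ht]
    have hder : ∀ t ∈ Icc (0:ℝ) b, HasDerivAt (fun u => snF (f u) - u) 0 t := by
      intro t ht
      have hd1 : HasDerivAt snF (snInt (f t)) (f t) := snF_hasDeriv (hfx t ht) (hf4 t ht)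
      have hd2 := (hd1.comp t (hfd1 t).hasDerivAt).fun_sub (hasDerivAt_id t)
      refine hd2.congr_deriv ?_
      have hsq : Real.sqrt (1 - f t ^ 4) = deriv f t := by
        rw [show 1 - f t ^ 4 = (deriv f t) ^ 2 from by nlinarith [hE t]]
        exact Real.sqrt_sq (hpos t ht).le
      unfold snInt
      rw [hsq, one_div, inv_mul_cancel₀ (ne_of_gt (hpos t ht))]
      norm_num
    intro u hu
    have hconst := constant_of_has_deriv_right_zero
      (f := fun u => snF (f u) - u) (a := 0) (b := b)
      (fun x hx => ((hder x hx).continuousAt.continuousWithinAt))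
      (fun x hx => ((hder x (Ico_subset_Icc_self hx)).hasDerivWithinAt)) u hu
    have hsnF0 : snF (0:ℝ) = 0 := intervalIntegral.integral_same
    have hconst' : snF (f u) - u = snF (f 0) - 0 := hconst
    rw [h0, hsnF0] at hconst'
    linarith
  -- there is a zero of deriv f in [0, ∞)
  have hIVT : ∀ t : ℝ, 0 ≤ t → deriv f t < 0 → ∃ z ∈ Icc (0:ℝ) t, deriv f z = 0 := by
    intro t ht hlt
    obtain ⟨z, hzmem, hz0⟩ := intermediate_value_Icc' ht hfd2.continuous.continuousOn
      (show (0:ℝ) ∈ Icc (deriv f t) (deriv f 0) from ⟨hlt.le, by rw [h1]; norm_num⟩)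
    exact ⟨z, hzmem, hz0⟩
  have hSne : ∃ t : ℝ, 0 ≤ t ∧ deriv f t = 0 := by
    by_contra hcon
    push_neg at hcon
    have hpos : ∀ t : ℝ, 0 ≤ t → 0 < deriv f t := by
      intro t ht
      rcases lt_or_gt_of_ne (hcon t ht) with h | h
      · obtain ⟨z, hz, hz0⟩ := hIVT t ht h
        exact absurd hz0 (hcon z hz.1)
      · exact h
    have hid := hchain (K + 1) (by linarith) (fun t ht => hpos t ht.1)
      (K + 1) ⟨by linarith, le_rfl⟩
    have hle1 : f (K + 1) ≤ 1 :=
      sn_le_one_of_pow4 (by nlinarith [hE (K + 1), sq_nonneg (deriv f (K + 1))])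
    have hge0 : 0 ≤ f (K + 1) := by
      have := hmonoAux (K + 1) (fun z hz => hpos z hz.1.le) ⟨le_rfl, by linarith⟩
        ⟨by linarith, le_rfl⟩ (by linarith)
      rw [h0] at this; exact this.le
    have := snF_le ⟨hge0, hle1⟩
    rw [hid, ← hK1] at this
    linarith
  -- T = first zero of deriv f
  set S : Set ℝ := {u : ℝ | 0 ≤ u ∧ deriv f u = 0} with hS
  have hScl : IsClosed S := by
    have : S = Ici 0 ∩ (deriv f) ⁻¹' {0} := by
      ext x; simp [hS, Set.mem_setOf_eq]
    rw [this]
    exact isClosed_Ici.inter (isClosed_singleton.preimage hfd2.continuous)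
  have hSbdd : BddBelow S := ⟨0, fun x hx => hx.1⟩
  have hSne' : S.Nonempty := by obtain ⟨t, h⟩ := hSne; exact ⟨t, h⟩
  set T : ℝ := sInf S with hT
  have hTS : T ∈ S := hScl.csInf_mem hSne' hSbdd
  have hT0 : 0 ≤ T := hTS.1
  have hTd : deriv f T = 0 := hTS.2
  have hTpos : 0 < T := by
    rcases eq_or_lt_of_le hT0 with h | h
    · exfalso; rw [← h] at hTd; rw [h1] at hTd; norm_num at hTd
    · exact h
  have hposT : ∀ t ∈ Ico (0:ℝ) T, 0 < deriv f t := by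
    intro t ht
    have hne : ∀ z ∈ Icc (0:ℝ) t, deriv f z ≠ 0 := by
      intro z hz hz0
      have : T ≤ z := csInf_le hSbdd ⟨hz.1, hz0⟩
      linarith [ht.2, hz.2]
    rcases lt_trichotomy (deriv f t) 0 with h | h | h
    · obtain ⟨z, hz, hz0⟩ := hIVT t ht.1 h
      exact absurd hz0 (hne z hz)
    · exact absurd h (hne t ⟨ht.1, le_rfl⟩)
    · exact h
  have hidT : ∀ u ∈ Ico (0:ℝ) T, snF (f u) = u := by
    intro u hu
    exact hchain u hu.1 (fun t ht => hposT t ⟨ht.1, lt_of_le_of_lt ht.2 hu.2⟩)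
      u ⟨hu.1, le_rfl⟩
  have hmonoT : StrictMonoOn f (Icc 0 T) :=
    hmonoAux T (fun z hz => hposT z ⟨hz.1.le, hz.2⟩)
  have hfT : f T = 1 := by
    have hfT4 : f T ^ 4 = 1 := by nlinarith [hE T, hTd]
    have hfTpos : 0 < f T := by
      have := hmonoT ⟨le_rfl, hT0⟩ ⟨hT0, le_rfl⟩ hTpos
      rw [h0] at this; exact this
    rcases lt_trichotomy (f T) 1 with h | h | h
    · exfalso
      have : f T ^ 4 < 1 := pow_lt_one₀ hfTpos.le h (by norm_num)
      linarith
    · exact h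
    · exfalso
      have : (1:ℝ) < f T ^ 4 := one_lt_pow₀ h (by norm_num)
      linarith
  -- T = K via continuity of snF ∘ f
  have hmaps : MapsTo f (Icc 0 T) (Icc 0 1) := by
    intro u hu
    constructor
    · rcases eq_or_lt_of_le hu.1 with h | h
      · rw [← h, h0]
      · have := hmonoT ⟨le_rfl, hT0⟩ hu h
        rw [h0] at this; exact this.le
    · rcases eq_or_lt_of_le hu.2 with h | h
      · rw [h, hfT]
      · have := hmonoT hu ⟨hT0, le_rfl⟩ h
        rw [hfT] at this; exact this.le
  have hcont1 : ContinuousWithinAt (fun u => snF (f u)) (Ico 0 T) T := by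
    have hco : ContinuousOn (fun u => snF (f u)) (Icc 0 T) :=
      snF_cont.comp hfd1.continuous.continuousOn hmaps
    exact (hco T ⟨hT0, le_rfl⟩).mono Ico_subset_Icc_self
  have hNB : (𝓝[Ico (0:ℝ) T] T).NeBot := by
    rw [← mem_closure_iff_nhdsWithin_neBot, closure_Ico (ne_of_lt hTpos)]
    exact ⟨hT0, le_rfl⟩
  have hlim1 : Filter.Tendsto (fun u => snF (f u)) (𝓝[Ico (0:ℝ) T] T) (𝓝 (snF (f T))) :=
    hcont1.tendsto
  have hlim2 : Filter.Tendsto (fun u => snF (f u)) (𝓝[Ico (0:ℝ) T] T) (𝓝 T) := by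
    have hid : Filter.Tendsto (fun u : ℝ => u) (𝓝[Ico (0:ℝ) T] T) (𝓝 T) :=
      Filter.tendsto_id.mono_left nhdsWithin_le_nhds
    apply hid.congr'
    filter_upwards [self_mem_nhdsWithin] with u hu
    exact (hidT u hu).symm
  have hTK : T = K := by
    have h := tendsto_nhds_unique hlim1 hlim2
    rw [hfT, ← hK1] at h
    exact h.symm
  have hfK : f K = 1 := by rw [← hTK]; exact hfT
  have hdK : deriv f K = 0 := by rw [← hTK]; exact hTd
  -- (i) oddness
  have hodd : ∀ u : ℝ, f (-u) = -f u := by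
    set g : ℝ → ℝ := fun u => -f (-u) with hg
    have hgc : ContDiff ℝ 2 g := (hf.comp (contDiff_id.neg)).neg
    have hgd : deriv g = fun u => deriv f (-u) := by
      funext u
      rw [hg]
      simp only [deriv.fun_neg, deriv_comp_neg, neg_neg]
    have hgO : ∀ u, deriv (deriv g) u = -2 * g u ^ 3 := by
      intro u
      rw [hgd]
      rw [deriv_comp_neg, hODE, hg]
      ring
    have := sn_unique hgc hf hgO hODE 0
      (by simp [hg, h0]) (by rw [hgd]; simp [h1])
    intro u
    have h := congrFun this (-u)
    simp only [hg, neg_neg] at h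
    linarith [h]
  -- (ii) symmetry about K
  have hsym : ∀ u : ℝ, f (2 * K - u) = f u := by
    set g : ℝ → ℝ := fun u => f (2 * K - u) with hg
    have hgc : ContDiff ℝ 2 g := hf.comp (contDiff_const.sub contDiff_id)
    have hgd : deriv g = fun u => -deriv f (2 * K - u) := by
      funext u
      rw [hg]
      simp only [deriv_comp_const_sub]
    have hgO : ∀ u, deriv (deriv g) u = -2 * g u ^ 3 := by
      intro u
      rw [hgd]
      have : deriv (fun u => -deriv f (2 * K - u)) u = deriv (deriv f) (2 * K - u) := by
        rw [deriv.fun_neg, deriv_comp_const_sub, neg_neg]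
      rw [this, hODE, hg]
    have := sn_unique hgc hf hgO hODE K
      (by simp [hg]; rw [show 2 * K - K = K from by ring]) 
      (by rw [hgd]
          show -deriv f (2 * K - K) = deriv f K
          rw [show 2 * K - K = K from by ring, hdK, neg_zero])
    intro u
    exact congrFun this u
  -- (iii) antiperiodicity
  have hanti : ∀ u : ℝ, f (u + 2 * K) = -f u := by
    intro u
    have h := hsym (-u)
    rw [sub_neg_eq_add] at h
    rw [show u + 2 * K = 2 * K + u from by ring] at *
    rw [h, hodd]
  refine ⟨hodd, hsym, hanti, ?_⟩
  intro u
  have h1' := hanti (u + 2 * K)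
  have h2' := hanti u
  rw [show u + 2 * K + 2 * K = u + 4 * K from by ring] at h1'
  rw [h1', h2', neg_neg]
end

section
/- Let f : ℝ → ℝ be three times differentiable with f'' = -2f³, let λ > 0, μ ≠ 0, θ ∈ ℝ, and set ω = (λ/2)^{1/4} μ and φ₀(t) = μ (2/λ)^{1/4} f(ω t + θ). Then g(t) = f'(ω t + θ) satisfies the linearized fluctuation equation g''(t) + 3λ φ₀(t)² g(t) = 0 for all t ∈ ℝ. -/
/-- If `f'' = -2f³` and `φ₀(t) = μ(2/λ)^{1/4} f(ωt + θ)` with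
`ω = (λ/2)^{1/4}μ`, then `g(t) = f'(ωt + θ)` solves the linearized fluctuation
equation `g'' + 3λφ₀²g = 0`. -/
theorem fluctuation_equation_solution
    (f : ℝ → ℝ) (hf : Differentiable ℝ f) (hf' : Differentiable ℝ (deriv f))
    (hf'' : Differentiable ℝ (deriv (deriv f)))
    (hODE : ∀ u : ℝ, deriv (deriv f) u = -2 * f u ^ 3)
    (lam μ θ : ℝ) (hlam : 0 < lam) (hμ : μ ≠ 0)
    (ω : ℝ) (hω : ω = (lam / 2) ^ ((1 : ℝ) / 4) * μ)
    (φ₀ g : ℝ → ℝ)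
    (hφ₀ : ∀ t : ℝ, φ₀ t = μ * (2 / lam) ^ ((1 : ℝ) / 4) * f (ω * t + θ))
    (hg : ∀ t : ℝ, g t = deriv f (ω * t + θ)) :
    ∀ t : ℝ, deriv (deriv g) t + 3 * lam * φ₀ t ^ 2 * g t = 0 := by
  intro t
  have hlam' : lam ≠ 0 := ne_of_gt hlam
  set a : ℝ := (lam / 2) ^ ((1 : ℝ) / 4) with ha
  set b : ℝ := (2 / lam) ^ ((1 : ℝ) / 4) with hb
  have hbase : (0 : ℝ) < 2 / lam := by positivity
  have h2 : lam * b ^ 4 = 2 := by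
    have hb4 : b ^ (4 : ℕ) = 2 / lam := by
      rw [hb, ← Real.rpow_natCast ((2 / lam) ^ ((1 : ℝ) / 4)) 4,
        ← Real.rpow_mul hbase.le]
      norm_num
    rw [hb4]; field_simp
  have h1 : a * b = 1 := by
    rw [ha, hb, ← Real.mul_rpow (by positivity) (by positivity)]
    have hone : lam / 2 * (2 / lam) = 1 := by field_simp
    rw [hone, Real.one_rpow]
  have h1' : a ^ 2 * b ^ 2 = 1 := by nlinarith [h1]
  have key : lam * b ^ 2 = 2 * a ^ 2 := by
    linear_combination a ^ 2 * h2 - lam * b ^ 2 * h1'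
  have hinner : ∀ s : ℝ, HasDerivAt (fun s : ℝ => ω * s + θ) ω s := by
    intro s
    simpa using ((hasDerivAt_id s).const_mul ω).add_const θ
  have hg1 : deriv g = fun s => ω * deriv (deriv f) (ω * s + θ) := by
    funext s
    have hgfun : g = fun s => deriv f (ω * s + θ) := funext hg
    rw [hgfun]
    have hc : HasDerivAt (fun s => deriv f (ω * s + θ))
        (deriv (deriv f) (ω * s + θ) * ω) s :=
      by have hc' := ((hf' (ω * s + θ)).hasDerivAt.comp s (hinner s)); exact hc'
    rw [hc.deriv]; ring
  have hd3 : ∀ u : ℝ, deriv (deriv (deriv f)) u = -6 * f u ^ 2 * deriv f u := by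
    intro u
    have hfun : deriv (deriv f) = fun v => -2 * f v ^ 3 := funext hODE
    rw [hfun]
    have h := HasDerivAt.const_mul (-2 : ℝ) ((hf u).hasDerivAt.pow 3)
    rw [show (fun v => -2 * f v ^ 3) = (fun y => -2 * (f ^ 3) y) from rfl, h.deriv]; norm_num; ring
  have hval : deriv (deriv g) t
      = ω * (deriv (deriv (deriv f)) (ω * t + θ) * ω) := by
    rw [hg1]
    exact (HasDerivAt.const_mul ω
      (((hf'' (ω * t + θ)).hasDerivAt.comp t (hinner t)))).deriv
  rw [hg t, hφ₀ t, hval, hd3, hω]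
  linear_combination (3 * μ ^ 2 * (f ((lam / 2) ^ ((1 : ℝ) / 4) * μ * t + θ)) ^ 2
    * deriv f ((lam / 2) ^ ((1 : ℝ) / 4) * μ * t + θ)) * key
end

section
/- Let f : ℝ → ℝ be the unique solution of f'' = -2f³ with f(0) = 0, f'(0) = 1, let K = ∫₀¹ dx/√(1 - x⁴), let λ > 0, μ > 0, and set ω = (λ/2)^{1/4} μ and φ₀(t) = μ (2/λ)^{1/4} f(ω t + K). Then h(t) = (1/(μ (8λ)^{1/4})) f'(ω t + K) satisfies h'' + 3λ φ₀² h = 0 for all t, with initial conditions h(0) = 0 and h'(0) = -1. -/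
open Set intervalIntegral MeasureTheory


lemma deriv2_diff (f : ℝ → ℝ) (hf : ContDiff ℝ 2 f) : Differentiable ℝ (deriv f) := by
  have h2 : ContDiff ℝ ((1 : ℕ∞) + 1) f := by
    have : ((1 : ℕ∞) + 1 : WithTop ℕ∞) = 2 := by norm_num
    rw [this]; exact hf
  exact ((contDiff_succ_iff_deriv.mp h2).2.2).differentiable (by simp)

lemma energy_const (f : ℝ → ℝ) (hf : ContDiff ℝ 2 f)
    (hODE : ∀ u : ℝ, deriv (deriv f) u = -2 * f u ^ 3)
    (h0 : f 0 = 0) (h1 : deriv f 0 = 1) :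
    ∀ u : ℝ, (deriv f u) ^ 2 + (f u) ^ 4 = 1 := by
  have hd1 : Differentiable ℝ f := hf.differentiable (by norm_num)
  have hd2 : Differentiable ℝ (deriv f) := deriv2_diff f hf
  have key : ∀ u : ℝ, deriv (fun u => (deriv f u) ^ 2 + (f u) ^ 4) u = 0 := by
    intro u
    have hA : HasDerivAt (fun u => (deriv f u) ^ 2) (2 * deriv f u * deriv (deriv f) u) u := by
      simpa using ((hd2 u).hasDerivAt.fun_pow 2)
    have hB : HasDerivAt (fun u => (f u) ^ 4) (4 * f u ^ 3 * deriv f u) u := by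
      simpa using ((hd1 u).hasDerivAt.fun_pow 4)
    have := (hA.fun_add hB).deriv
    rw [this, hODE u]; ring
  intro u
  have := is_const_of_deriv_eq_zero (f := fun u => (deriv f u) ^ 2 + (f u) ^ 4)
    ((hd2.pow 2).add (hd1.pow 4)) key u 0
  simp only [h0, h1] at this
  rw [this]; norm_num


open Set intervalIntegral MeasureTheory

noncomputable def tpfQ : ℝ → ℝ := fun x => 1 / Real.sqrt (1 - x ^ 4)
noncomputable def tpfF : ℝ → ℝ := fun y => ∫ x in (0:ℝ)..y, tpfQ x

lemma tpfQ_nonneg (x : ℝ) : 0 ≤ tpfQ x :=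
  div_nonneg zero_le_one (Real.sqrt_nonneg _)

lemma tpfQ_meas : Measurable tpfQ := by
  have h : Measurable fun x : ℝ => Real.sqrt (1 - x ^ 4) :=
    Real.continuous_sqrt.measurable.comp ((continuous_const.sub (continuous_pow 4)).measurable)
  exact measurable_const.div h

lemma tpfQ_contOn : ContinuousOn tpfQ (Set.Ioo (-1 : ℝ) 1) := by
  apply ContinuousOn.div continuousOn_const
  · exact (Real.continuous_sqrt.comp (by continuity)).continuousOn
  · intro x hx
    have hx4 : x ^ 4 < 1 := by
      have : |x| < 1 := abs_lt.mpr ⟨hx.1, hx.2⟩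
      calc x ^ 4 = |x| ^ 4 := by rw [← abs_pow, abs_of_nonneg (by positivity)]
        _ < 1 := pow_lt_one₀ (abs_nonneg x) this (by norm_num)
    have : 0 < 1 - x ^ 4 := by linarith
    exact (Real.sqrt_pos.mpr this).ne'

lemma tpfQ_integrable : IntervalIntegrable tpfQ MeasureTheory.volume 0 1 := by
  have hmaj : IntervalIntegrable (fun x : ℝ => (1 - x) ^ (-(1/2) : ℝ)) MeasureTheory.volume 0 1 := by
    have h0 : IntervalIntegrable (fun x : ℝ => x ^ (-(1/2) : ℝ)) MeasureTheory.volume 0 1 :=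
      intervalIntegrable_rpow' (by norm_num)
    have := (h0.comp_sub_left 1).symm
    simpa using this
  apply hmaj.mono_fun tpfQ_meas.aestronglyMeasurable
  filter_upwards [MeasureTheory.ae_restrict_mem measurableSet_uIoc] with x hx
  rw [Set.uIoc_of_le (by norm_num : (0:ℝ) ≤ 1)] at hx
  obtain ⟨hx0, hx1⟩ := hx
  have h2 : (0:ℝ) ≤ 1 - x := by linarith
  rw [Real.norm_eq_abs, Real.norm_eq_abs, abs_of_nonneg (tpfQ_nonneg x),
    abs_of_nonneg (Real.rpow_nonneg h2 _)]
  have hrw : (1 - x) ^ (-(1/2) : ℝ) = 1 / Real.sqrt (1 - x) := by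
    rw [Real.rpow_neg h2, Real.sqrt_eq_rpow]; norm_num
  rw [hrw]
  rcases eq_or_lt_of_le hx1 with heq | hlt
  · subst heq
    simp [tpfQ]
  · have hp : x ^ 4 ≤ x ^ 1 := pow_le_pow_of_le_one hx0.le hx1 (by norm_num)
    rw [pow_one] at hp
    have h1 : 1 - x ^ 4 ≥ 1 - x := by linarith
    apply one_div_le_one_div_of_le
    · exact Real.sqrt_pos.mpr (by linarith)
    · exact Real.sqrt_le_sqrt (by linarith)


lemma tpfQ_integrable_sub {y z : ℝ} (hy : y ∈ Icc (0:ℝ) 1) (hz : z ∈ Icc (0:ℝ) 1) :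
    IntervalIntegrable tpfQ MeasureTheory.volume y z := by
  apply tpfQ_integrable.mono_set
  rw [uIcc_of_le (by norm_num : (0:ℝ) ≤ 1)]
  exact uIcc_subset_Icc hy hz

lemma tpfF_contOn : ContinuousOn tpfF (Icc 0 1) := by
  have h := intervalIntegral.continuousOn_primitive_interval
    (f := tpfQ) (μ := MeasureTheory.volume) (a := 0) (b := 1) ?_
  · rw [uIcc_of_le (by norm_num : (0:ℝ) ≤ 1)] at h; exact h
  · rw [uIcc_of_le (by norm_num : (0:ℝ) ≤ 1)]
    exact (intervalIntegrable_iff_integrableOn_Icc_of_le (by norm_num)).mp tpfQ_integrable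

lemma tpfF_zero : tpfF 0 = 0 := intervalIntegral.integral_same

lemma tpfF_mono {y z : ℝ} (hy : y ∈ Icc (0:ℝ) 1) (hz : z ∈ Icc (0:ℝ) 1) (hyz : y ≤ z) :
    tpfF y ≤ tpfF z := by
  have hadd := intervalIntegral.integral_add_adjacent_intervals
    (tpfQ_integrable_sub (Set.mem_Icc.mpr ⟨le_rfl, by norm_num⟩) hy) (tpfQ_integrable_sub hy hz)
  have hnn : 0 ≤ ∫ x in y..z, tpfQ x :=
    intervalIntegral.integral_nonneg hyz fun x _ => tpfQ_nonneg x
  unfold tpfF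
  linarith [hadd]

lemma tpfF_hasDeriv {y : ℝ} (hy0 : 0 ≤ y) (hy1 : y < 1) :
    HasDerivAt tpfF (tpfQ y) y := by
  apply intervalIntegral.integral_hasDerivAt_right
    (tpfQ_integrable_sub (Set.mem_Icc.mpr ⟨le_rfl, by norm_num⟩) ⟨hy0, hy1.le⟩)
  · exact ⟨Ioo (-1 : ℝ) 1, Ioo_mem_nhds (by linarith) hy1,
      tpfQ_meas.stronglyMeasurable.aestronglyMeasurable⟩
  · exact tpfQ_contOn.continuousAt (Ioo_mem_nhds (by linarith) hy1)


lemma quarter_period (f : ℝ → ℝ) (hf : ContDiff ℝ 2 f)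
    (hODE : ∀ u : ℝ, deriv (deriv f) u = -2 * f u ^ 3)
    (h0 : f 0 = 0) (h1 : deriv f 0 = 1) :
    f (tpfF 1) = 1 ∧ deriv f (tpfF 1) = 0 := by
  have hd1 : Differentiable ℝ f := hf.differentiable (by norm_num)
  have hd2 : Differentiable ℝ (deriv f) := deriv2_diff f hf
  have hc1 : Continuous (deriv f) := hd2.continuous
  have energy := energy_const f hf hODE h0 h1
  -- f is globally bounded by 1 in absolute value
  have hfle1 : ∀ u : ℝ, f u ≤ 1 := by
    intro u
    nlinarith [energy u, sq_nonneg (deriv f u), sq_nonneg (f u), sq_nonneg (f u + 1),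
      sq_nonneg (f u - 1), sq_nonneg (f u ^ 2 - 1), sq_nonneg (f u ^ 2 + 1)]
  -- IVT helper: if deriv f is nonpositive somewhere on [0,∞), it has a zero before
  have ivt : ∀ v : ℝ, 0 ≤ v → deriv f v ≤ 0 → ∃ w, 0 ≤ w ∧ w ≤ v ∧ deriv f w = 0 := by
    intro v hv hne
    have hsub := intermediate_value_Icc' hv (hc1.continuousOn (s := Icc 0 v))
    have h0mem : (0:ℝ) ∈ Icc (deriv f v) (deriv f 0) := ⟨hne, by rw [h1]; norm_num⟩
    obtain ⟨w, hw, hw0⟩ := hsub h0mem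
    exact ⟨w, hw.1, hw.2, hw0⟩
  -- the chain identity on any interval where deriv f > 0
  have chainEq : ∀ b : ℝ, 0 ≤ b → (∀ u ∈ Ico (0:ℝ) b, 0 < deriv f u) →
      tpfF (f b) = b ∧ 0 ≤ f b := by
    intro b hb hpos
    rcases eq_or_lt_of_le hb with rfl | hb'
    · rw [h0, tpfF_zero]; exact ⟨rfl, le_rfl⟩
    -- f is monotone on [0,b]
    have hmono : MonotoneOn f (Icc 0 b) := by
      apply monotoneOn_of_deriv_nonneg (convex_Icc 0 b) hd1.continuous.continuousOn
        hd1.differentiableOn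
      intro x hx
      rw [interior_Icc] at hx
      exact (hpos x ⟨hx.1.le, hx.2⟩).le
    have hfnn : ∀ u ∈ Icc (0:ℝ) b, 0 ≤ f u := by
      intro u hu
      have := hmono ⟨le_rfl, hb⟩ hu hu.1
      rwa [h0] at this
    have hflt1 : ∀ u ∈ Ico (0:ℝ) b, f u < 1 := by
      intro u hu
      by_contra hge
      push_neg at hge
      have heq1 : f u = 1 := le_antisymm (hfle1 u) hge
      have hp := hpos u hu
      have he := energy u
      rw [heq1] at he
      nlinarith
    -- derivative of tpfF ∘ f is 1 on [0, b)
    have hchain : ∀ u ∈ Ico (0:ℝ) b, HasDerivAt (fun v => tpfF (f v)) 1 u := by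
      intro u hu
      have hy0 : 0 ≤ f u := hfnn u ⟨hu.1, hu.2.le⟩
      have hy1 : f u < 1 := hflt1 u hu
      have hFy := tpfF_hasDeriv hy0 hy1
      have hfu : HasDerivAt f (deriv f u) u := (hd1 u).hasDerivAt
      have hcomp := hFy.comp u hfu
      have hsq : (deriv f u) ^ 2 = 1 - f u ^ 4 := by linarith [energy u]
      have hval : deriv f u = Real.sqrt (1 - f u ^ 4) := by
        rw [← hsq, Real.sqrt_sq (hpos u hu).le]
      have hne : Real.sqrt (1 - f u ^ 4) ≠ 0 := by rw [← hval]; exact (hpos u hu).ne'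
      have hQ : tpfQ (f u) * deriv f u = 1 := by
        simp only [tpfQ]
        rw [hval, one_div, inv_mul_cancel₀ hne]
      rwa [hQ] at hcomp
    -- conclude via uniqueness of primitives
    have heq := eq_of_has_deriv_right_eq (f := fun v => tpfF (f v)) (f' := fun _ => (1:ℝ))
      (g := id) (a := 0) (b := b)
      (fun u hu => (hchain u hu).hasDerivWithinAt)
      (fun u _ => (hasDerivAt_id u).hasDerivWithinAt)
      ?_ continuousOn_id ?_
    · have := heq b ⟨hb, le_rfl⟩
      exact ⟨this, hfnn b ⟨hb, le_rfl⟩⟩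
    · exact tpfF_contOn.comp hd1.continuous.continuousOn
        (fun u hu => ⟨hfnn u hu, hfle1 (u)⟩)
    · show tpfF (f 0) = id 0
      rw [h0, tpfF_zero]; rfl
  -- the set of zeros of deriv f on [0,∞) is nonempty
  set S : Set ℝ := Ici 0 ∩ (deriv f) ⁻¹' {0} with hS
  have hSclosed : IsClosed S := isClosed_Ici.inter (isClosed_singleton.preimage hc1)
  have hSne : S.Nonempty := by
    by_contra hne
    rw [Set.not_nonempty_iff_eq_empty] at hne
    have hno : ∀ u : ℝ, 0 ≤ u → deriv f u ≠ 0 := by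
      intro u hu hzero
      have : u ∈ S := ⟨hu, hzero⟩
      simp [hne] at this
    have hpos : ∀ u : ℝ, 0 ≤ u → 0 < deriv f u := by
      intro u hu
      rcases lt_trichotomy (deriv f u) 0 with h | h | h
      · obtain ⟨w, hw0, _, hwz⟩ := ivt u hu h.le
        exact absurd hwz (hno w hw0)
      · exact absurd h (hno u hu)
      · exact h
    set b := tpfF 1 + 1 with hbdef
    have hF1nn : 0 ≤ tpfF 1 := by
      have := tpfF_mono (Set.mem_Icc.mpr ⟨le_rfl, by norm_num⟩)
        (Set.mem_Icc.mpr ⟨by norm_num, le_rfl⟩) (by norm_num)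
      rwa [tpfF_zero] at this
    have hbnn : 0 ≤ b := by linarith
    obtain ⟨hFb, hfbnn⟩ := chainEq b hbnn (fun u hu => hpos u hu.1)
    have : tpfF (f b) ≤ tpfF 1 :=
      tpfF_mono (Set.mem_Icc.mpr ⟨hfbnn, hfle1 b⟩)
        (Set.mem_Icc.mpr ⟨by norm_num, le_rfl⟩) (hfle1 b)
    rw [hFb] at this
    linarith
  have hSbdd : BddBelow S := ⟨0, fun x hx => hx.1⟩
  set T := sInf S with hT
  have hTS : T ∈ S := hSclosed.csInf_mem hSne hSbdd
  have hT0 : 0 ≤ T := hTS.1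
  have hT' : deriv f T = 0 := hTS.2
  have hTpos : 0 < T := by
    rcases eq_or_lt_of_le hT0 with h | h
    · exfalso; rw [← h] at hT'; rw [h1] at hT'; norm_num at hT'
    · exact h
  have hpos : ∀ u ∈ Ico (0:ℝ) T, 0 < deriv f u := by
    intro u hu
    have hne : deriv f u ≠ 0 := by
      intro hz
      have : T ≤ u := csInf_le hSbdd ⟨hu.1, hz⟩
      linarith [hu.2]
    rcases lt_trichotomy (deriv f u) 0 with h | h | h
    · obtain ⟨w, hw0, hwu, hwz⟩ := ivt u hu.1 h.le
      have : T ≤ w := csInf_le hSbdd ⟨hw0, hwz⟩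
      linarith [hu.2]
    · exact absurd h hne
    · exact h
  obtain ⟨hFT, hfTnn⟩ := chainEq T hT0 hpos
  have hfT4 : f T ^ 4 = 1 := by
    have := energy T
    rw [hT'] at this
    nlinarith
  have hfT : f T = 1 := by
    have hfac : (f T - 1) * (f T ^ 3 + f T ^ 2 + f T + 1) = 0 := by linear_combination hfT4
    rcases mul_eq_zero.mp hfac with h | h
    · linarith
    · nlinarith [hfTnn]
  have hKT : tpfF 1 = T := by rw [← hfT, hFT]
  rw [hKT]
  exact ⟨hfT, hT'⟩


/-- With `f` the unique solution of `f'' = -2f³`, `f(0)=0`, `f'(0)=1`,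
`K = ∫₀¹ dx/√(1-x⁴)`, `ω = (λ/2)^{1/4}μ` and `φ₀(t) = μ(2/λ)^{1/4} f(ωt + K)`,
the function `h(t) = f'(ωt + K)/(μ(8λ)^{1/4})` solves `h'' + 3λφ₀²h = 0` with
`h(0) = 0` and `h'(0) = -1` (Green's function data of the fluctuation operator). -/
theorem two_point_function_rest_frame
    (f : ℝ → ℝ) (hf : ContDiff ℝ 2 f)
    (hODE : ∀ u : ℝ, deriv (deriv f) u = -2 * f u ^ 3)
    (h0 : f 0 = 0) (h1 : deriv f 0 = 1)
    (K : ℝ) (hK : K = ∫ x in (0:ℝ)..1, 1 / Real.sqrt (1 - x ^ 4))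
    (lam μ : ℝ) (hlam : 0 < lam) (hμ : 0 < μ)
    (ω : ℝ) (hω : ω = (lam / 2) ^ ((1 : ℝ) / 4) * μ)
    (φ₀ h : ℝ → ℝ)
    (hφ₀ : ∀ t : ℝ, φ₀ t = μ * (2 / lam) ^ ((1 : ℝ) / 4) * f (ω * t + K))
    (hh : ∀ t : ℝ, h t = (1 / (μ * (8 * lam) ^ ((1 : ℝ) / 4))) * deriv f (ω * t + K)) :
    (∀ t : ℝ, deriv (deriv h) t + 3 * lam * φ₀ t ^ 2 * h t = 0) ∧
    h 0 = 0 ∧ deriv h 0 = -1 := by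
  have hd1 : Differentiable ℝ f := hf.differentiable (by norm_num)
  have hd2 : Differentiable ℝ (deriv f) := deriv2_diff f hf
  -- identify K with tpfF 1 and get quarter-period data
  have hKF : K = tpfF 1 := by rw [hK]; simp [tpfF, tpfQ]
  obtain ⟨hfK, hfK'⟩ := quarter_period f hf hODE h0 h1
  rw [← hKF] at hfK hfK'
  -- abbreviations
  set c : ℝ := 1 / (μ * (8 * lam) ^ ((1 : ℝ) / 4)) with hc
  have hhfun : h = fun t => c * deriv f (ω * t + K) := funext fun t => hh t
  have hline : ∀ t : ℝ, HasDerivAt (fun t : ℝ => ω * t + K) ω t := fun t => by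
    simpa using ((hasDerivAt_id t).const_mul ω).add_const K
  -- first derivative of h
  have hderivh : ∀ t : ℝ, HasDerivAt h ((-2 * c * ω) * f (ω * t + K) ^ 3) t := by
    intro t
    have h2 : HasDerivAt (deriv f) (deriv (deriv f) (ω * t + K)) (ω * t + K) :=
      (hd2 _).hasDerivAt
    have h3 := (h2.comp t (hline t)).const_mul c
    rw [hhfun]
    have : c * (deriv (deriv f) (ω * t + K) * ω) = (-2 * c * ω) * f (ω * t + K) ^ 3 := by
      rw [hODE]; ring
    rw [← this]
    simpa [Function.comp] using h3
  have hDh : deriv h = fun t => (-2 * c * ω) * f (ω * t + K) ^ 3 :=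
    funext fun t => (hderivh t).deriv
  -- second derivative of h
  have hderiv2h : ∀ t : ℝ, deriv (deriv h) t
      = (-2 * c * ω) * (3 * f (ω * t + K) ^ 2 * (deriv f (ω * t + K) * ω)) := by
    intro t
    have h4 : HasDerivAt (fun t : ℝ => f (ω * t + K)) (deriv f (ω * t + K) * ω) t :=
      ((hd1 _).hasDerivAt).comp t (hline t)
    have h5 := (h4.pow 3).const_mul (-2 * c * ω)
    rw [hDh]
    have := h5.deriv
    simpa using this
  -- key power identities
  have hl2 : (0:ℝ) < lam / 2 := by linarith
  have hcω : c * ω = 1 / 2 := by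
    have h8 : (0:ℝ) < (8 * lam) ^ ((1 : ℝ) / 4) := Real.rpow_pos_of_pos (by linarith) _
    have hl4 : (0:ℝ) < (lam / 2) ^ ((1 : ℝ) / 4) := Real.rpow_pos_of_pos hl2 _
    have hμ0 : μ ≠ 0 := hμ.ne'
    rw [hc, hω]
    rw [div_mul_eq_mul_div, one_mul]
    rw [show (lam / 2) ^ ((1 : ℝ) / 4) * μ / (μ * (8 * lam) ^ ((1 : ℝ) / 4))
        = (lam / 2) ^ ((1 : ℝ) / 4) / (8 * lam) ^ ((1 : ℝ) / 4) by
      field_simp]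
    rw [← Real.div_rpow hl2.le (by linarith : (0:ℝ) ≤ 8 * lam)]
    rw [show lam / 2 / (8 * lam) = 1 / 16 by
      field_simp
      ring]
    rw [show (1 / 16 : ℝ) = (1 / 2 : ℝ) ^ (4 : ℕ) by norm_num]
    rw [← Real.rpow_natCast ((1:ℝ)/2) 4, ← Real.rpow_mul (by norm_num)]
    norm_num
  -- coefficient identity : 3 * lam * ((2/lam)^(1/4))^2 = 6 * ((lam/2)^(1/4))^2
  have hsq1 : ((2 / lam) ^ ((1 : ℝ) / 4)) ^ (2:ℕ) = Real.sqrt (2 / lam) := by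
    rw [← Real.rpow_natCast ((2/lam) ^ ((1:ℝ)/4)) 2, ← Real.rpow_mul (by positivity)]
    rw [Real.sqrt_eq_rpow]; norm_num
  have hsq2 : ((lam / 2) ^ ((1 : ℝ) / 4)) ^ (2:ℕ) = Real.sqrt (lam / 2) := by
    rw [← Real.rpow_natCast ((lam/2) ^ ((1:ℝ)/4)) 2, ← Real.rpow_mul (by positivity)]
    rw [Real.sqrt_eq_rpow]; norm_num
  have hcoef : 3 * lam * Real.sqrt (2 / lam) = 6 * Real.sqrt (lam / 2) := by
    have ha : Real.sqrt lam > 0 := Real.sqrt_pos.mpr hlam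
    have hb : Real.sqrt 2 > 0 := Real.sqrt_pos.mpr (by norm_num)
    have ha2 : Real.sqrt lam ^ 2 = lam := Real.sq_sqrt hlam.le
    have hb2 : Real.sqrt 2 ^ 2 = 2 := Real.sq_sqrt (by norm_num)
    have hd1' : Real.sqrt (2 / lam) = Real.sqrt 2 / Real.sqrt lam :=
      Real.sqrt_div (by norm_num) lam
    have hd2' : Real.sqrt (lam / 2) = Real.sqrt lam / Real.sqrt 2 :=
      Real.sqrt_div hlam.le 2
    rw [hd1', hd2']
    field_simp
    nlinarith [ha2, hb2]
  refine ⟨?_, ?_, ?_⟩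
  · intro t
    rw [hderiv2h t, hφ₀ t, hh t]
    have key : 3 * lam * ((2 / lam) ^ ((1 : ℝ) / 4)) ^ (2:ℕ)
        = 6 * ((lam / 2) ^ ((1 : ℝ) / 4)) ^ (2:ℕ) := by
      rw [hsq1, hsq2]; exact hcoef
    rw [hω]
    linear_combination (c * μ ^ 2 * f ((lam / 2) ^ ((1 : ℝ) / 4) * μ * t + K) ^ 2 *
      deriv f ((lam / 2) ^ ((1 : ℝ) / 4) * μ * t + K)) * key
  · rw [hh 0, show ω * 0 + K = K by ring, hfK']
    ring
  · have := (hderivh 0).deriv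
    rw [this, show ω * 0 + K = K by ring, hfK]
    linear_combination (-2 : ℝ) * hcω
end

section
/- Let f : ℝ → ℝ be the unique solution of f'' = -2f³ with f(0) = 0, f'(0) = 1, and K = ∫₀¹ dx/√(1 - x⁴). For μ > 0, λ > 0 define the rest-frame two-point function D(t; μ, λ) = (1/(μ (8λ)^{1/4})) f'((λ/2)^{1/4} μ t + K). Then for every s > 0 and all t ∈ ℝ, D(t; s·μ, s⁻⁴·λ) = D(t; μ, λ). Consequently D satisfies the Callan–Symanzik scaling equation μ ∂D/∂μ - 4λ ∂D/∂λ = 0, corresponding to beta function β(λ) = -4λ and anomalous dimension γ = 0. -/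
/-- The rest-frame two-point function
`D(t; μ, λ) = f'((λ/2)^{1/4} μ t + K)/(μ(8λ)^{1/4})` is invariant under the scaling
`μ ↦ sμ`, `λ ↦ s⁻⁴λ`, and consequently satisfies the Callan–Symanzik equation
`μ ∂D/∂μ - 4λ ∂D/∂λ = 0` (beta function `β(λ) = -4λ`, anomalous dimension `γ = 0`). -/
theorem callan_symanzik_two_point
    (f : ℝ → ℝ) (hf : ContDiff ℝ 2 f)
    (hODE : ∀ u : ℝ, deriv (deriv f) u = -2 * f u ^ 3)
    (h0 : f 0 = 0) (h1 : deriv f 0 = 1)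
    (K : ℝ) (hK : K = ∫ x in (0:ℝ)..1, 1 / Real.sqrt (1 - x ^ 4))
    (D : ℝ → ℝ → ℝ → ℝ)
    (hD : ∀ t μ lam : ℝ, D t μ lam =
      (1 / (μ * (8 * lam) ^ ((1 : ℝ) / 4))) *
        deriv f ((lam / 2) ^ ((1 : ℝ) / 4) * μ * t + K)) :
    (∀ s : ℝ, 0 < s → ∀ t μ lam : ℝ, 0 < μ → 0 < lam →
      D t (s * μ) (lam / s ^ 4) = D t μ lam) ∧
    (∀ t μ lam : ℝ, 0 < μ → 0 < lam →
      μ * deriv (fun m => D t m lam) μ - 4 * lam * deriv (fun l => D t μ l) lam = 0) := by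
  have hs4 : ∀ s : ℝ, 0 < s → ((s ^ 4 : ℝ)) ^ ((1:ℝ)/4) = s := by
    intro s hs
    rw [← Real.rpow_natCast s 4, ← Real.rpow_mul hs.le]
    norm_num
  constructor
  · intro s hs t μ lam hμ hlam
    rw [hD, hD]
    have hsne : s ≠ 0 := hs.ne'
    have h8 : (8 * (lam / s ^ 4)) ^ ((1:ℝ)/4) = (8*lam) ^ ((1:ℝ)/4) / s := by
      rw [show 8 * (lam / s ^ 4) = (8*lam)/s^4 by ring,
        Real.div_rpow (by positivity) (by positivity), hs4 s hs]
    have h2 : ((lam / s ^ 4) / 2) ^ ((1:ℝ)/4) = (lam/2) ^ ((1:ℝ)/4) / s := by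
      rw [show (lam / s ^ 4)/2 = (lam/2)/s^4 by ring,
        Real.div_rpow (by positivity) (by positivity), hs4 s hs]
    rw [h8, h2]
    congr 1
    · field_simp
    · congr 1
      field_simp
  · intro t μ lam hμ hlam
    have hμ0 : μ ≠ 0 := hμ.ne'
    have hlam0 : lam ≠ 0 := hlam.ne'
    have hg : Differentiable ℝ (deriv f) := by
      have h2 : ContDiff ℝ ((1:ℕ∞) + 1) f := hf.of_le (by norm_num)
      exact ((contDiff_succ_iff_deriv.mp h2).2.2).differentiable (by norm_num)
    have hμA : μ * (8*lam) ^ ((1:ℝ)/4) ≠ 0 := by positivity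
    -- μ-derivative
    have e1 : (fun m => D t m lam) = fun m => (m * (8*lam) ^ ((1:ℝ)/4))⁻¹ *
        deriv f ((lam/2) ^ ((1:ℝ)/4) * m * t + K) := by
      funext m; rw [hD, one_div]
    have h1 : HasDerivAt (fun m : ℝ => (m * (8*lam) ^ ((1:ℝ)/4))⁻¹)
        (-((8*lam) ^ ((1:ℝ)/4)) / (μ * (8*lam) ^ ((1:ℝ)/4))^2) μ :=
      (hasDerivAt_mul_const _).inv hμA
    have h2 : HasDerivAt (fun m : ℝ => deriv f ((lam/2) ^ ((1:ℝ)/4) * m * t + K))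
        (deriv (deriv f) ((lam/2) ^ ((1:ℝ)/4) * μ * t + K) * ((lam/2) ^ ((1:ℝ)/4) * t)) μ := by
      have inner : HasDerivAt (fun m : ℝ => (lam/2) ^ ((1:ℝ)/4) * m * t + K)
          ((lam/2) ^ ((1:ℝ)/4) * t) μ := by
        have := (((hasDerivAt_id μ).const_mul ((lam/2) ^ ((1:ℝ)/4))).mul_const t).add_const K
        simpa using this
      simpa [Function.comp_def] using ((hg _).hasDerivAt).comp μ inner
    have d1 : deriv (fun m => D t m lam) μ =
        -((8*lam) ^ ((1:ℝ)/4)) / (μ * (8*lam) ^ ((1:ℝ)/4))^2 *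
            deriv f ((lam/2) ^ ((1:ℝ)/4) * μ * t + K)
          + (μ * (8*lam) ^ ((1:ℝ)/4))⁻¹ *
            (deriv (deriv f) ((lam/2) ^ ((1:ℝ)/4) * μ * t + K) * ((lam/2) ^ ((1:ℝ)/4) * t)) := by
      rw [e1]
      simpa [Pi.mul_def] using (h1.mul h2).deriv
    -- lam-derivative
    have e2 : (fun l => D t μ l) = fun l => (μ * (8*l) ^ ((1:ℝ)/4))⁻¹ *
        deriv f ((l/2) ^ ((1:ℝ)/4) * μ * t + K) := by
      funext l; rw [hD, one_div]
    have hrpow1 : HasDerivAt (fun l : ℝ => (8*l) ^ ((1:ℝ)/4))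
        ((1:ℝ)/4 * (8*lam) ^ ((1:ℝ)/4 - 1) * 8) lam := by
      have inner : HasDerivAt (fun l : ℝ => 8*l) 8 lam := by
        simpa using (hasDerivAt_id lam).const_mul (8:ℝ)
      have outer := Real.hasDerivAt_rpow_const (x := 8*lam) (p := (1:ℝ)/4)
        (Or.inl (by positivity))
      simpa [mul_assoc, Function.comp_def] using outer.comp lam inner
    have h1' : HasDerivAt (fun l : ℝ => (μ * (8*l) ^ ((1:ℝ)/4))⁻¹)
        (-(μ * ((1:ℝ)/4 * (8*lam) ^ ((1:ℝ)/4 - 1) * 8)) / (μ * (8*lam) ^ ((1:ℝ)/4))^2) lam := by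
      have := (hrpow1.const_mul μ).inv (by positivity)
      simpa [Pi.inv_def] using this
    have hrpow2 : HasDerivAt (fun l : ℝ => (l/2) ^ ((1:ℝ)/4))
        ((1:ℝ)/4 * (lam/2) ^ ((1:ℝ)/4 - 1) * (1/2)) lam := by
      have inner : HasDerivAt (fun l : ℝ => l/2) ((1:ℝ)/2) lam := by
        simpa using (hasDerivAt_id lam).div_const (2:ℝ)
      have outer := Real.hasDerivAt_rpow_const (x := lam/2) (p := (1:ℝ)/4)
        (Or.inl (by positivity))
      simpa [mul_assoc, Function.comp_def] using outer.comp lam inner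
    have h2' : HasDerivAt (fun l : ℝ => deriv f ((l/2) ^ ((1:ℝ)/4) * μ * t + K))
        (deriv (deriv f) ((lam/2) ^ ((1:ℝ)/4) * μ * t + K) *
          ((1:ℝ)/4 * (lam/2) ^ ((1:ℝ)/4 - 1) * (1/2) * μ * t)) lam := by
      have inner := ((hrpow2.mul_const μ).mul_const t).add_const K
      simpa [Function.comp_def] using ((hg _).hasDerivAt).comp lam inner
    have d2 : deriv (fun l => D t μ l) lam =
        -(μ * ((1:ℝ)/4 * (8*lam) ^ ((1:ℝ)/4 - 1) * 8)) / (μ * (8*lam) ^ ((1:ℝ)/4))^2 *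
            deriv f ((lam/2) ^ ((1:ℝ)/4) * μ * t + K)
          + (μ * (8*lam) ^ ((1:ℝ)/4))⁻¹ *
            (deriv (deriv f) ((lam/2) ^ ((1:ℝ)/4) * μ * t + K) *
              ((1:ℝ)/4 * (lam/2) ^ ((1:ℝ)/4 - 1) * (1/2) * μ * t)) := by
      rw [e2]
      simpa [Pi.mul_def] using (h1'.mul h2').deriv
    have ha : (8*lam) ^ ((1:ℝ)/4 - 1) = (8*lam) ^ ((1:ℝ)/4) / (8*lam) := by
      rw [Real.rpow_sub (by positivity), Real.rpow_one]
    have hb : (lam/2) ^ ((1:ℝ)/4 - 1) = (lam/2) ^ ((1:ℝ)/4) / (lam/2) := by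
      rw [Real.rpow_sub (by positivity), Real.rpow_one]
    have hA0 : ((8*lam) ^ ((1:ℝ)/4)) ≠ 0 := by positivity
    have hc0 : ((lam/2) ^ ((1:ℝ)/4)) ≠ 0 := by positivity
    rw [d1, d2, ha, hb]
    field_simp
    ring
end
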